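/- arXiv:2411.00384 — 6 statements merged into one kernel-verified Lean document; each statement's English description precedes it below -/
import Mathlib

section
/- Let M' be a perfect matching in the one-to-one instance G'_{M'} with weight function wt_{M'}. If there exists an alternating cycle C with respect to M' in G'_{M'} containing two parallel copies (a_i, b_j) and (a_k, b_l) of the same original edge (a,b) ∉ M, then replacing these two edges by (a_i, b_l) and (a_k, b_j) splits C into two shorter alternating cycles C₁ and C₂ with wt_{M'}(C) = wt_{M'}(C₁) + wt_{M'}(C₂). In particular, wt_{M'}(a_i,b_j) + wt_{M'}(a_k,b_l) = wt_{M'}(a_i,b_l) + wt_{M'}(a_k,b_j). -/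
/-- Vote of a vertex comparing a neighbor of rank `x` with a neighbor of rank `y`
(lower rank = more preferred). -/
def vsgn (x y : ℕ) : ℤ := if x < y then 1 else if y < x then -1 else 0

/-- Vote in the cloned instance: clone preferences are lexicographic, first by the
rank of the underlying vertex, then by the clone index (lower index preferred). -/
def lsgn (r j r' j' : ℕ) : ℤ :=
  if r < r' ∨ (r = r' ∧ j < j') then 1
  else if r' < r ∨ (r' = r ∧ j' < j) then -1 else 0

/-- The clones of the vertices of `A`: vertex `a` is replaced by `cap a` clones. -/
abbrev Clones {A : Type*} (cap : A → ℕ) : Type _ := (a : A) × Fin (cap a)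

/-- `M(a)`, the set of jobs matched to agent `a`. -/
def jobsOf {A B : Type*} [DecidableEq A] [DecidableEq B]
    (M : Finset (A × B)) (a : A) : Finset B :=
  (M.filter (fun e => e.1 = a)).image Prod.snd

/-- `M(b)`, the set of agents matched to job `b`. -/
def agentsOf {A B : Type*} [DecidableEq A] [DecidableEq B]
    (M : Finset (A × B)) (b : B) : Finset A :=
  (M.filter (fun e => e.2 = b)).image Prod.fst

/-- The set of possible values `∑_{u ∈ S} vote(u, σ u)` over bijections `σ : S ≃ T`;
the vote `vote_v(S,T)` of the paper is the least element of this set. -/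
def voteSet {B : Type*} (r : B → ℕ) (S T : Finset B) : Set ℤ :=
  {z | ∃ σ : {x // x ∈ S} ≃ {x // x ∈ T},
    z = ∑ x : {x // x ∈ S}, vsgn (r x.1) (r ((σ x).1))}

/-- A perfect matching in the many-to-many instance: `M ⊆ E` and every vertex `v`
is matched to exactly `cap v` partners. -/
def IsPerfect {A B : Type*} [DecidableEq A] [DecidableEq B]
    (E M : Finset (A × B)) (capA : A → ℕ) (capB : B → ℕ) : Prop :=
  M ⊆ E ∧ (∀ a, (M.filter (fun e => e.1 = a)).card = capA a) ∧
    ∀ b, (M.filter (fun e => e.2 = b)).card = capB b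

/-- `M` is a popular perfect matching: `M` is perfect and `Δ(M,N) ≥ 0` for every
perfect matching `N`, where each vertex votes using the most adversarial bijection
between `M(v) \ N(v)` and `N(v) \ M(v)`.  Since the minima at distinct vertices are
independent, `Δ(M,N) ≥ 0` is equivalent to: every choice of one vote value per
vertex sums to a nonnegative number. -/
def PopularPerfect {A B : Type*} [Fintype A] [Fintype B] [DecidableEq A] [DecidableEq B]
    (E : Finset (A × B)) (capA : A → ℕ) (capB : B → ℕ)
    (rA : A → B → ℕ) (rB : B → A → ℕ) (M : Finset (A × B)) : Prop :=
  IsPerfect E M capA capB ∧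
    ∀ N : Finset (A × B), IsPerfect E N capA capB →
      ∀ za : A → ℤ, ∀ zb : B → ℤ,
        (∀ a, za a ∈ voteSet (rA a) (jobsOf M a \ jobsOf N a) (jobsOf N a \ jobsOf M a)) →
        (∀ b, zb b ∈ voteSet (rB b) (agentsOf M b \ agentsOf N b) (agentsOf N b \ agentsOf M b)) →
        0 ≤ (∑ a, za a) + ∑ b, zb b

/-- `M'` is a one-to-one realization of the many-to-many matching `M` in the cloned
instance: every `M'`-edge projects to an `M`-edge, and distinct clones of the same
agent are matched to clones of distinct jobs (so each `M`-edge is used once). -/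
def Realizes {A B : Type*} {capA : A → ℕ} {capB : B → ℕ}
    (M' : Clones capA ≃ Clones capB) (M : Finset (A × B)) : Prop :=
  (∀ x, (x.1, (M' x).1) ∈ M) ∧
    ∀ x y : Clones capA, x ≠ y → x.1 = y.1 → (M' x).1 ≠ (M' y).1

/-- The edge set `E'_{M'}` of the instance `G'_{M'}`: the edges of `M'` together
with all clone-copies of edges of `E \ M`. -/
def inEM {A B : Type*} [DecidableEq A] [DecidableEq B] {capA : A → ℕ} {capB : B → ℕ}
    (E M : Finset (A × B)) (M' : Clones capA ≃ Clones capB)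
    (x : Clones capA) (y : Clones capB) : Prop :=
  M' x = y ∨ ((x.1, y.1) ∈ E ∧ (x.1, y.1) ∉ M)

/-- `wt_{M'}(x,y) = vote_x(y, M'(x)) + vote_y(x, M'(y))` in the cloned instance. -/
def wtEdge {A B : Type*} {capA : A → ℕ} {capB : B → ℕ}
    (rA : A → B → ℕ) (rB : B → A → ℕ) (M' : Clones capA ≃ Clones capB)
    (x : Clones capA) (y : Clones capB) : ℤ :=
  lsgn (rA x.1 y.1) y.2 (rA x.1 (M' x).1) (M' x).2 +
    lsgn (rB y.1 x.1) x.2 (rB y.1 (M'.symm y).1) (M'.symm y).2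

/-- An alternating cycle with respect to the (perfect one-to-one) matching `M'`,
with non-matching edges taken from the edge relation `Edge`: the cycle visits the
distinct clones `f 0, g 0, f 1, g 1, …` cyclically, `(f t, g t)` being `M'`-edges
and `(f (t+1), g t)` being non-matching edges of the instance. -/
structure AltCycle {A B : Type*} {capA : A → ℕ} {capB : B → ℕ}
    (M' : Clones capA ≃ Clones capB)
    (Edge : Clones capA → Clones capB → Prop) where
  m : ℕ
  f : Fin (m + 2) → Clones capA
  g : Fin (m + 2) → Clones capB
  hf : Function.Injective f
  hg : Function.Injective g
  hmatch : ∀ t, M' (f t) = g t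
  hnonmatch : ∀ t, M' (f (t + 1)) ≠ g t
  hedge : ∀ t, Edge (f (t + 1)) (g t)

/-- The weight `wt_{M'}(C)` of an alternating cycle: the sum of the weights of all
its edges. -/
def AltCycle.wt {A B : Type*} {capA : A → ℕ} {capB : B → ℕ}
    {M' : Clones capA ≃ Clones capB} {Edge : Clones capA → Clones capB → Prop}
    (C : AltCycle M' Edge) (rA : A → B → ℕ) (rB : B → A → ℕ) : ℤ :=
  ∑ t : Fin (C.m + 2),
    (wtEdge rA rB M' (C.f t) (C.g t) + wtEdge rA rB M' (C.f (t + 1)) (C.g t))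

/-- A cycle is valid if no two of its non-matching edges are clone-copies of the
same edge of `G` (matching edges are automatically distinct copies). -/
def AltCycle.Valid {A B : Type*} {capA : A → ℕ} {capB : B → ℕ}
    {M' : Clones capA ≃ Clones capB} {Edge : Clones capA → Clones capB → Prop}
    (C : AltCycle M' Edge) : Prop :=
  Function.Injective (fun t : Fin (C.m + 2) => ((C.f (t + 1)).1, (C.g t).1))

lemma lsgn_of_ne {r r' : ℕ} (h : r ≠ r') (j j' u u' : ℕ) :
    lsgn r j r' u = lsgn r j' r' u' := by
  rcases lt_or_gt_of_ne h with h' | h' <;>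
    simp [lsgn, h', h'.ne, h'.ne', h'.not_gt]

/-- chord swap: if an alternating cycle `C` w.r.t. `M'` in `G'_{M'}`
contains two parallel clone-copies `(a_i,b_j)` and `(a_k,b_l)` of the same original
edge `(a,b) ∉ M` (so the `M'`-partners of these four clones are clones of other
vertices), then `wt_{M'}(a_i,b_j) + wt_{M'}(a_k,b_l) = wt_{M'}(a_i,b_l) + wt_{M'}(a_k,b_j)`;
consequently replacing the two edges by the chords `(a_i,b_l)`, `(a_k,b_j)` splits `C`
into two shorter cycles `C₁, C₂` with `wt_{M'}(C) = wt_{M'}(C₁) + wt_{M'}(C₂)`. -/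
theorem stmt5 {A B : Type*} [DecidableEq A] [DecidableEq B]
    {capA : A → ℕ} {capB : B → ℕ}
    (rA : A → B → ℕ) (rB : B → A → ℕ)
    (hrA : ∀ a, Function.Injective (rA a)) (hrB : ∀ b, Function.Injective (rB b))
    (M' : Clones capA ≃ Clones capB)
    (a : A) (b : B) (i k : Fin (capA a)) (j l : Fin (capB b))
    (hik : i ≠ k) (hjl : j ≠ l)
    (hi : (M' ⟨a, i⟩).1 ≠ b) (hk : (M' ⟨a, k⟩).1 ≠ b)
    (hj : (M'.symm ⟨b, j⟩).1 ≠ a) (hl : (M'.symm ⟨b, l⟩).1 ≠ a) :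
    (wtEdge rA rB M' ⟨a, i⟩ ⟨b, j⟩ + wtEdge rA rB M' ⟨a, k⟩ ⟨b, l⟩
      = wtEdge rA rB M' ⟨a, i⟩ ⟨b, l⟩ + wtEdge rA rB M' ⟨a, k⟩ ⟨b, j⟩) ∧
    ∀ C C₁ C₂ : Finset (Clones capA × Clones capB),
      ((⟨a, i⟩ : Clones capA), (⟨b, j⟩ : Clones capB)) ∈ C →
      ((⟨a, k⟩ : Clones capA), (⟨b, l⟩ : Clones capB)) ∈ C →
      ((⟨a, i⟩ : Clones capA), (⟨b, l⟩ : Clones capB)) ∉ C →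
      ((⟨a, k⟩ : Clones capA), (⟨b, j⟩ : Clones capB)) ∉ C →
      Disjoint C₁ C₂ →
      C₁ ∪ C₂ = insert (⟨a, i⟩, ⟨b, l⟩) (insert (⟨a, k⟩, ⟨b, j⟩)
        ((C.erase (⟨a, i⟩, ⟨b, j⟩)).erase (⟨a, k⟩, ⟨b, l⟩))) →
      (∑ e ∈ C, wtEdge rA rB M' e.1 e.2)
        = (∑ e ∈ C₁, wtEdge rA rB M' e.1 e.2) + ∑ e ∈ C₂, wtEdge rA rB M' e.1 e.2 := by
  set P : Fin (capA a) → ℤ :=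
    fun i => lsgn (rA a b) 0 (rA a (M' ⟨a, i⟩).1) 0 with hP
  set Q : Fin (capB b) → ℤ :=
    fun j => lsgn (rB b a) 0 (rB b (M'.symm ⟨b, j⟩).1) 0 with hQ
  have key : ∀ (i : Fin (capA a)) (j : Fin (capB b)),
      (M' ⟨a, i⟩).1 ≠ b → (M'.symm ⟨b, j⟩).1 ≠ a →
      wtEdge rA rB M' ⟨a, i⟩ ⟨b, j⟩ = P i + Q j := by
    intro i j hi' hj'
    have h1 : rA a b ≠ rA a (M' ⟨a, i⟩).1 := fun h => hi' ((hrA a) h).symm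
    have h2 : rB b a ≠ rB b (M'.symm ⟨b, j⟩).1 := fun h => hj' ((hrB b) h).symm
    simp only [wtEdge, hP, hQ]
    rw [lsgn_of_ne h1 (j : ℕ) 0 _ 0, lsgn_of_ne h2 (i : ℕ) 0 _ 0]
  have hmain : wtEdge rA rB M' ⟨a, i⟩ ⟨b, j⟩ + wtEdge rA rB M' ⟨a, k⟩ ⟨b, l⟩
      = wtEdge rA rB M' ⟨a, i⟩ ⟨b, l⟩ + wtEdge rA rB M' ⟨a, k⟩ ⟨b, j⟩ := by
    rw [key i j hi hj, key k l hk hl, key i l hi hl, key k j hk hj]; ring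
  refine ⟨hmain, ?_⟩
  intro C C₁ C₂ h1 h2 h3 h4 hdisj hunion
  set w : Clones capA × Clones capB → ℤ := fun e => wtEdge rA rB M' e.1 e.2 with hw
  have hik' : (⟨a, i⟩ : Clones capA) ≠ ⟨a, k⟩ := by
    intro h; exact hik (by simpa using h)
  have hjl' : (⟨b, j⟩ : Clones capB) ≠ ⟨b, l⟩ := by
    intro h; exact hjl (by simpa using h)
  have e12 : ((⟨a, i⟩ : Clones capA), (⟨b, j⟩ : Clones capB))
      ≠ (⟨a, k⟩, ⟨b, l⟩) := by
    intro h; exact hik' (congrArg Prod.fst h)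
  have e34 : ((⟨a, i⟩ : Clones capA), (⟨b, l⟩ : Clones capB))
      ≠ (⟨a, k⟩, ⟨b, j⟩) := by
    intro h; exact hik' (congrArg Prod.fst h)
  set D := (C.erase (⟨a, i⟩, ⟨b, j⟩)).erase (⟨a, k⟩, ⟨b, l⟩) with hD
  have h3' : ((⟨a, i⟩ : Clones capA), (⟨b, l⟩ : Clones capB)) ∉ D := by
    intro h; exact h3 (Finset.mem_of_mem_erase (Finset.mem_of_mem_erase h))
  have h4' : ((⟨a, k⟩ : Clones capA), (⟨b, j⟩ : Clones capB)) ∉ D := by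
    intro h; exact h4 (Finset.mem_of_mem_erase (Finset.mem_of_mem_erase h))
  have h3'' : ((⟨a, i⟩ : Clones capA), (⟨b, l⟩ : Clones capB))
      ∉ insert ((⟨a, k⟩ : Clones capA), (⟨b, j⟩ : Clones capB)) D := by
    simp only [Finset.mem_insert]; rintro (h | h)
    · exact e34 h
    · exact h3' h
  have hsumC : ∑ e ∈ C, w e = w (⟨a, i⟩, ⟨b, j⟩) + (w (⟨a, k⟩, ⟨b, l⟩) + ∑ e ∈ D, w e) := by
    rw [hD, ← Finset.add_sum_erase _ w h1,
      ← Finset.add_sum_erase _ w (Finset.mem_erase.mpr ⟨fun h => e12 h.symm, h2⟩)]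
  have hsum12 : ∑ e ∈ C₁, w e + ∑ e ∈ C₂, w e
      = w (⟨a, i⟩, ⟨b, l⟩) + (w (⟨a, k⟩, ⟨b, j⟩) + ∑ e ∈ D, w e) := by
    rw [← Finset.sum_union hdisj, hunion, Finset.sum_insert h3'', Finset.sum_insert h4']
  have : w (⟨a, i⟩, ⟨b, j⟩) + w (⟨a, k⟩, ⟨b, l⟩)
      = w (⟨a, i⟩, ⟨b, l⟩) + w (⟨a, k⟩, ⟨b, j⟩) := hmain
  simp only [hw] at hsumC hsum12 this ⊢
  linarith
end

section
/- If there exists an alternating cycle C with respect to M' in G'_{M'} with wt_{M'}(C) > 0, then there exists a valid alternating cycle C' with respect to M' in G'_{M'} with wt_{M'}(C') > 0, where an alternating cycle is valid if no two of its edges are copies of the same edge of G. -/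
section Aux
set_option linter.unusedSectionVars false

lemma lsgn_ne {r r' : ℕ} (j j' : ℕ) (h : r ≠ r') : lsgn r j r' j' = vsgn r r' := by
  simp only [lsgn, vsgn]; split_ifs <;> omega

lemma lsgn_self (r j : ℕ) : lsgn r j r j = 0 := by
  simp only [lsgn]; split_ifs <;> omega

lemma vsgn_self (r : ℕ) : vsgn r r = 0 := by simp [vsgn]

variable {A B : Type*} [DecidableEq A] [DecidableEq B]
  {capA : A → ℕ} {capB : B → ℕ}

/-- The weight of a non-matching clone edge, as a function of the clones only
through the underlying vertices and the matched partners. -/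
def Wt (rA : A → B → ℕ) (rB : B → A → ℕ) (M' : Clones capA ≃ Clones capB)
    (x : Clones capA) (y : Clones capB) : ℤ :=
  vsgn (rA x.1 y.1) (rA x.1 (M' x).1) + vsgn (rB y.1 x.1) (rB y.1 (M'.symm y).1)

variable (rA : A → B → ℕ) (rB : B → A → ℕ) (M' : Clones capA ≃ Clones capB)

lemma wtEdge_match (x : Clones capA) : wtEdge rA rB M' x (M' x) = 0 := by
  rw [wtEdge, M'.symm_apply_apply, lsgn_self, lsgn_self]
  ring

lemma Wt_match (x : Clones capA) : Wt rA rB M' x (M' x) = 0 := by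
  simp [Wt, vsgn_self]

lemma wtEdge_eq_Wt {M : Finset (A × B)} (hreal : Realizes M' M)
    (hrA : ∀ a, Function.Injective (rA a)) (hrB : ∀ b, Function.Injective (rB b))
    (x : Clones capA) (y : Clones capB) (h : (x.1, y.1) ∉ M) :
    wtEdge rA rB M' x y = Wt rA rB M' x y := by
  have h1 : rA x.1 y.1 ≠ rA x.1 (M' x).1 := by
    intro he
    exact h ((hrA x.1 he) ▸ hreal.1 x)
  have h2 : rB y.1 x.1 ≠ rB y.1 (M'.symm y).1 := by
    intro he
    have := hreal.1 (M'.symm y)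
    rw [Equiv.apply_symm_apply] at this
    exact h ((hrB y.1 he) ▸ this)
  rw [wtEdge, Wt, lsgn_ne _ _ h1, lsgn_ne _ _ h2]

lemma Wt_swap (x x' : Clones capA) (y y' : Clones capB)
    (hx : x.1 = x'.1) (hy : y.1 = y'.1) :
    Wt rA rB M' x y + Wt rA rB M' x' y' = Wt rA rB M' x y' + Wt rA rB M' x' y := by
  simp only [Wt, hx, hy]; ring

end Aux

section Rot
set_option linter.unusedSectionVars false
variable {A B : Type*} [DecidableEq A] [DecidableEq B]
  {capA : A → ℕ} {capB : B → ℕ}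
  {M' : Clones capA ≃ Clones capB} {Edge : Clones capA → Clones capB → Prop}

/-- Rotation of an alternating cycle. -/
def AltCycle.rot (C : AltCycle M' Edge) (k : Fin (C.m + 2)) : AltCycle M' Edge where
  m := C.m
  f t := C.f (t + k)
  g t := C.g (t + k)
  hf := C.hf.comp (add_left_injective k)
  hg := C.hg.comp (add_left_injective k)
  hmatch t := C.hmatch (t + k)
  hnonmatch t := by
    have := C.hnonmatch (t + k)
    rwa [add_right_comm] at this
  hedge t := by
    have := C.hedge (t + k)
    rwa [add_right_comm] at this

lemma AltCycle.rot_wt (C : AltCycle M' Edge) (k : Fin (C.m + 2))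
    (rA : A → B → ℕ) (rB : B → A → ℕ) : (C.rot k).wt rA rB = C.wt rA rB := by
  show ∑ t : Fin (C.m + 2), _ = _
  rw [AltCycle.wt,
    ← Equiv.sum_comp (Equiv.addRight k)
      (fun t => wtEdge rA rB M' (C.f t) (C.g t) + wtEdge rA rB M' (C.f (t + 1)) (C.g t))]
  apply Finset.sum_congr rfl
  intro t _
  simp only [Equiv.coe_addRight, AltCycle.rot]
  rw [add_right_comm]
  rfl

end Rot

section Split
set_option linter.unusedSectionVars false
open Fin.NatCast
variable {A B : Type*} [DecidableEq A] [DecidableEq B]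
  {capA : A → ℕ} {capB : B → ℕ}
  (rA : A → B → ℕ) (rB : B → A → ℕ) (M' : Clones capA ≃ Clones capB)
  (E M : Finset (A × B))

lemma wt_eq_sum (hreal : Realizes M' M)
    (hrA : ∀ a, Function.Injective (rA a)) (hrB : ∀ b, Function.Injective (rB b))
    (C : AltCycle M' (inEM E M M')) :
    C.wt rA rB = ∑ i ∈ Finset.range (C.m + 2),
      Wt rA rB M' (C.f ((i : ℕ) + 1 : ℕ)) (C.g (i : ℕ)) := by
  rw [AltCycle.wt,
    ← Fin.sum_univ_eq_sum_range (fun i : ℕ => Wt rA rB M' (C.f ((i+1 : ℕ) : Fin (C.m+2))) (C.g (i : Fin (C.m+2)))) (C.m + 2)]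
  apply Finset.sum_congr rfl
  intro t _
  have h0 : wtEdge rA rB M' (C.f t) (C.g t) = 0 := by
    rw [← C.hmatch t]; exact wtEdge_match rA rB M' (C.f t)
  have hnm : ((C.f (t + 1)).1, (C.g t).1) ∉ M := by
    rcases C.hedge t with h | h
    · exact absurd h (C.hnonmatch t)
    · exact h.2
  rw [h0, zero_add, wtEdge_eq_Wt rA rB M' hreal hrA hrB _ _ hnm]
  rw [Nat.cast_add_one, Fin.cast_val_eq_self]

/-- The alternating cycle on the segment of matching indices `l, …, l+d+1`,
closed up by the edge `(C.f l, C.g (l+d+1))`. -/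
def subCycle (C : AltCycle M' (inEM E M M')) (l d : ℕ) (hld : l + d + 1 ≤ C.m + 1)
    (hclose : inEM E M M' (C.f (l : ℕ)) (C.g ((l + d + 1 : ℕ)))) :
    AltCycle M' (inEM E M M') where
  m := d
  f i := C.f ((l + i.val : ℕ))
  g i := C.g ((l + i.val : ℕ))
  hf := by
    intro i j hij
    have h2 : ((l + i.val : ℕ) : Fin (C.m + 2)) = ((l + j.val : ℕ) : Fin (C.m + 2)) :=
      C.hf hij
    have hi := i.isLt; have hj := j.isLt
    have h3 : ((l + i.val : ℕ) : Fin (C.m + 2)).val = ((l + j.val : ℕ) : Fin (C.m + 2)).val := by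
      rw [h2]
    rw [Fin.val_cast_of_lt (by omega), Fin.val_cast_of_lt (by omega)] at h3
    exact Fin.ext (by omega)
  hg := by
    intro i j hij
    have h2 : ((l + i.val : ℕ) : Fin (C.m + 2)) = ((l + j.val : ℕ) : Fin (C.m + 2)) :=
      C.hg hij
    have hi := i.isLt; have hj := j.isLt
    have h3 : ((l + i.val : ℕ) : Fin (C.m + 2)).val = ((l + j.val : ℕ) : Fin (C.m + 2)).val := by
      rw [h2]
    rw [Fin.val_cast_of_lt (by omega), Fin.val_cast_of_lt (by omega)] at h3
    exact Fin.ext (by omega)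
  hmatch i := C.hmatch _
  hnonmatch i := by
    beta_reduce
    rcases Nat.lt_or_ge i.val (d + 1) with h | h
    · have hv : ((i + 1 : Fin (d + 2))).val = i.val + 1 :=
        Fin.val_add_one_of_lt (by rw [Fin.lt_iff_val_lt_val, Fin.val_last]; exact h)
      rw [hv, ← add_assoc, Nat.cast_add_one]
      exact C.hnonmatch ((l + i.val : ℕ))
    · have hi : i.val = d + 1 := by have := i.isLt; omega
      have hv : ((i + 1 : Fin (d + 2))).val = 0 := by
        have : i = Fin.last (d + 1) := Fin.ext (by simpa using hi)
        rw [this, Fin.last_add_one, Fin.val_zero]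
      rw [hv, hi]
      intro hEq
      rw [C.hmatch _] at hEq
      have h3 := C.hg hEq
      have h4 : ((l + 0 : ℕ) : Fin (C.m + 2)).val = ((l + (d + 1) : ℕ) : Fin (C.m + 2)).val := by
        rw [h3]
      rw [Fin.val_cast_of_lt (by omega), Fin.val_cast_of_lt (by omega)] at h4
      omega
  hedge i := by
    beta_reduce
    rcases Nat.lt_or_ge i.val (d + 1) with h | h
    · have hv : ((i + 1 : Fin (d + 2))).val = i.val + 1 :=
        Fin.val_add_one_of_lt (by rw [Fin.lt_iff_val_lt_val, Fin.val_last]; exact h)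
      rw [hv, ← add_assoc, Nat.cast_add_one]
      exact C.hedge ((l + i.val : ℕ))
    · have hi : i.val = d + 1 := by have := i.isLt; omega
      have hv : ((i + 1 : Fin (d + 2))).val = 0 := by
        have : i = Fin.last (d + 1) := Fin.ext (by simpa using hi)
        rw [this, Fin.last_add_one, Fin.val_zero]
      rw [hv, hi, add_zero, ← add_assoc]
      exact hclose

lemma subCycle_wt (hreal : Realizes M' M)
    (hrA : ∀ a, Function.Injective (rA a)) (hrB : ∀ b, Function.Injective (rB b))
    (C : AltCycle M' (inEM E M M')) (l d : ℕ) (hld : l + d + 1 ≤ C.m + 1)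
    (hclose : inEM E M M' (C.f (l : ℕ)) (C.g ((l + d + 1 : ℕ)))) :
    (subCycle M' E M C l d hld hclose).wt rA rB =
      (∑ i ∈ Finset.range (d + 1), Wt rA rB M' (C.f ((l + i + 1 : ℕ))) (C.g ((l + i : ℕ))))
        + Wt rA rB M' (C.f (l : ℕ)) (C.g ((l + d + 1 : ℕ))) := by
  rw [wt_eq_sum rA rB M' E M hreal hrA hrB]
  simp only [subCycle]
  rw [Finset.sum_range_succ]
  congr 1
  · apply Finset.sum_congr rfl
    intro i hi
    rw [Finset.mem_range] at hi
    erw [Fin.val_cast_of_lt (show i + 1 < d + 2 by omega),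
      Fin.val_cast_of_lt (show i < d + 2 by omega), ← add_assoc]
  · erw [Fin.val_cast_of_lt (show d + 1 < d + 2 by omega)]
    have h0 : (((d + 1) + 1 : ℕ) : Fin (d + 2)).val = 0 := by
      rw [Fin.val_natCast, Nat.mod_self]
    erw [h0, add_zero, ← add_assoc]

end Split

section Descent
set_option linter.unusedSectionVars false
open Fin.NatCast
variable {A B : Type*} [DecidableEq A] [DecidableEq B]
  {capA : A → ℕ} {capB : B → ℕ}
  (rA : A → B → ℕ) (rB : B → A → ℕ) (M' : Clones capA ≃ Clones capB)
  (E M : Finset (A × B))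

lemma descent (hreal : Realizes M' M)
    (hrA : ∀ a, Function.Injective (rA a)) (hrB : ∀ b, Function.Injective (rB b))
    (C₀ : AltCycle M' (inEM E M M')) (hw : 0 < C₀.wt rA rB)
    (s : Fin (C₀.m + 2)) (hsl : s ≠ Fin.last (C₀.m + 1))
    (hpf : (C₀.f (s + 1)).1 = (C₀.f 0).1)
    (hpg : (C₀.g s).1 = (C₀.g (Fin.last (C₀.m + 1))).1) :
    ∃ C' : AltCycle M' (inEM E M M'), C'.m < C₀.m ∧ 0 < C'.wt rA rB := by
  have hsv : s.val ≤ C₀.m := by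
    have h2 := s.isLt
    rcases Nat.lt_or_ge s.val (C₀.m + 1) with h | h
    · omega
    · exact absurd (Fin.ext (by rw [Fin.val_last]; omega)) hsl
  set hW : ℕ → ℤ := fun i => Wt rA rB M' (C₀.f ((i + 1 : ℕ))) (C₀.g ((i : ℕ))) with hWdef
  have hlastc : ((C₀.m + 1 : ℕ) : Fin (C₀.m + 2)) = Fin.last (C₀.m + 1) :=
    Fin.ext (by rw [Fin.val_cast_of_lt (by omega), Fin.val_last])
  have hsc : ((s.val : ℕ) : Fin (C₀.m + 2)) = s := Fin.cast_val_eq_self s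
  have hsc1 : ((s.val + 1 : ℕ) : Fin (C₀.m + 2)) = s + 1 := by
    rw [Nat.cast_add_one, hsc]
  have hz : (((C₀.m + 1) + 1 : ℕ) : Fin (C₀.m + 2)) = 0 := Fin.natCast_self (C₀.m + 2)
  -- weight decomposition
  have e1 : C₀.wt rA rB =
      ((∑ i ∈ Finset.range s.val, hW i) + Wt rA rB M' (C₀.f 0) (C₀.g s))
      + ((∑ j ∈ Finset.range (C₀.m - s.val), hW (s.val + 1 + j))
          + Wt rA rB M' (C₀.f (s + 1)) (C₀.g ((C₀.m + 1 : ℕ)))) := by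
    rw [wt_eq_sum rA rB M' E M hreal hrA hrB C₀]
    have hsplit : ∑ i ∈ Finset.range (C₀.m + 2), hW i =
        (∑ i ∈ Finset.range (s.val + 1), hW i)
        + ∑ i ∈ Finset.Ico (s.val + 1) (C₀.m + 2), hW i := by
      rw [Finset.range_eq_Ico, ← Finset.sum_Ico_consecutive hW
        (by omega : 0 ≤ s.val + 1) (by omega : s.val + 1 ≤ C₀.m + 2), ← Finset.range_eq_Ico]
    have hIco : ∑ i ∈ Finset.Ico (s.val + 1) (C₀.m + 2), hW i =
        ∑ j ∈ Finset.range (C₀.m + 1 - s.val), hW (s.val + 1 + j) := by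
      rw [Finset.sum_Ico_eq_sum_range, show C₀.m + 2 - (s.val + 1) = C₀.m + 1 - s.val by omega]
    have hr1 : ∑ i ∈ Finset.range (s.val + 1), hW i =
        (∑ i ∈ Finset.range s.val, hW i) + hW s.val := Finset.sum_range_succ hW s.val
    have hr2 : ∑ j ∈ Finset.range (C₀.m + 1 - s.val), hW (s.val + 1 + j) =
        (∑ j ∈ Finset.range (C₀.m - s.val), hW (s.val + 1 + j)) + hW (C₀.m + 1) := by
      rw [show C₀.m + 1 - s.val = (C₀.m - s.val) + 1 by omega, Finset.sum_range_succ]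
      congr 2
      omega
    have hWs : hW s.val = Wt rA rB M' (C₀.f (s + 1)) (C₀.g s) := by
      rw [hWdef]; beta_reduce; rw [hsc1, hsc]
    have hWn : hW (C₀.m + 1) = Wt rA rB M' (C₀.f 0) (C₀.g ((C₀.m + 1 : ℕ))) := by
      rw [hWdef]; beta_reduce; rw [hz]
    have hswap := Wt_swap rA rB M' (C₀.f (s + 1)) (C₀.f 0) (C₀.g s)
      (C₀.g ((C₀.m + 1 : ℕ))) hpf (by rw [hlastc]; exact hpg)
    rw [hsplit, hIco, hr1, hr2, hWs, hWn]
    linarith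
  have hlastedge : ((C₀.f 0).1, (C₀.g (Fin.last (C₀.m + 1))).1) ∈ E ∧
      ((C₀.f 0).1, (C₀.g (Fin.last (C₀.m + 1))).1) ∉ M := by
    have h1 := C₀.hedge (Fin.last (C₀.m + 1))
    have h2 := C₀.hnonmatch (Fin.last (C₀.m + 1))
    rw [Fin.last_add_one] at h1 h2
    rcases h1 with h | h
    · exact absurd h h2
    · exact h
  have hsedge : ((C₀.f (s + 1)).1, (C₀.g s).1) ∈ E ∧
      ((C₀.f (s + 1)).1, (C₀.g s).1) ∉ M := by
    rcases C₀.hedge s with h | h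
    · exact absurd h (C₀.hnonmatch s)
    · exact h
  rcases lt_or_ge 0 ((∑ i ∈ Finset.range s.val, hW i) + Wt rA rB M' (C₀.f 0) (C₀.g s))
    with hV2 | hV2
  · -- left sub-cycle, matching indices 0 .. s.val
    have hs1 : 1 ≤ s.val := by
      by_contra h
      have hs0 : s = 0 := Fin.ext (by rw [Fin.val_zero]; omega)
      rw [show s.val = 0 by omega, Finset.range_zero, Finset.sum_empty, hs0,
        ← C₀.hmatch 0, Wt_match] at hV2
      simp at hV2
    have hld : 0 + (s.val - 1) + 1 ≤ C₀.m + 1 := by omega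
    have hclose : inEM E M M' (C₀.f ((0 : ℕ))) (C₀.g ((0 + (s.val - 1) + 1 : ℕ))) := by
      right
      rw [show ((0 : ℕ) : Fin (C₀.m + 2)) = 0 from rfl,
        show (0 + (s.val - 1) + 1 : ℕ) = s.val by omega, hsc, hpg]
      exact hlastedge
    refine ⟨subCycle M' E M C₀ 0 (s.val - 1) hld hclose, by show s.val - 1 < C₀.m; omega, ?_⟩
    rw [subCycle_wt rA rB M' E M hreal hrA hrB C₀ 0 (s.val - 1) hld hclose]
    have he : ∑ i ∈ Finset.range ((s.val - 1) + 1),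
        Wt rA rB M' (C₀.f ((0 + i + 1 : ℕ))) (C₀.g ((0 + i : ℕ)))
        = ∑ i ∈ Finset.range s.val, hW i := by
      rw [show (s.val - 1) + 1 = s.val by omega]
      apply Finset.sum_congr rfl
      intro i _
      show Wt rA rB M' (C₀.f ((0 + i + 1 : ℕ))) (C₀.g ((0 + i : ℕ)))
          = Wt rA rB M' (C₀.f ((i + 1 : ℕ))) (C₀.g ((i : ℕ)))
      rw [show (0 + i + 1 : ℕ) = i + 1 by omega, show (0 + i : ℕ) = i by omega]
    rw [he, show ((0 : ℕ) : Fin (C₀.m + 2)) = 0 from rfl,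
      show (0 + (s.val - 1) + 1 : ℕ) = s.val by omega, hsc]
    exact hV2
  · -- right sub-cycle, matching indices s.val + 1 .. C₀.m + 1
    have hV1 : 0 < (∑ j ∈ Finset.range (C₀.m - s.val), hW (s.val + 1 + j))
        + Wt rA rB M' (C₀.f (s + 1)) (C₀.g ((C₀.m + 1 : ℕ))) := by linarith
    have hsn : s.val < C₀.m := by
      by_contra h
      rw [show C₀.m - s.val = 0 by omega, Finset.range_zero, Finset.sum_empty,
        zero_add] at hV1
      have hg1 : C₀.g ((C₀.m + 1 : ℕ)) = M' (C₀.f (s + 1)) := by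
        rw [C₀.hmatch (s + 1), ← hsc1]
        congr 2
        omega
      rw [hg1, Wt_match] at hV1
      simp at hV1
    have hld : (s.val + 1) + (C₀.m - s.val - 1) + 1 ≤ C₀.m + 1 := by omega
    have hclose : inEM E M M' (C₀.f ((s.val + 1 : ℕ)))
        (C₀.g (((s.val + 1) + (C₀.m - s.val - 1) + 1 : ℕ))) := by
      right
      rw [hsc1, show (s.val + 1) + (C₀.m - s.val - 1) + 1 = C₀.m + 1 by omega, hlastc, ← hpg]
      exact hsedge
    refine ⟨subCycle M' E M C₀ (s.val + 1) (C₀.m - s.val - 1) hld hclose, by show C₀.m - s.val - 1 < C₀.m; omega, ?_⟩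
    rw [subCycle_wt rA rB M' E M hreal hrA hrB C₀ (s.val + 1) (C₀.m - s.val - 1) hld hclose]
    have he : ∑ i ∈ Finset.range ((C₀.m - s.val - 1) + 1),
        Wt rA rB M' (C₀.f ((s.val + 1 + i + 1 : ℕ))) (C₀.g ((s.val + 1 + i : ℕ)))
        = ∑ j ∈ Finset.range (C₀.m - s.val), hW (s.val + 1 + j) := by
      rw [show (C₀.m - s.val - 1) + 1 = C₀.m - s.val by omega]
    rw [he, hsc1, show (s.val + 1) + (C₀.m - s.val - 1) + 1 = C₀.m + 1 by omega]
    exact hV1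

end Descent

section Step
set_option linter.unusedSectionVars false
variable {A B : Type*} [DecidableEq A] [DecidableEq B]
  {capA : A → ℕ} {capB : B → ℕ}
  (rA : A → B → ℕ) (rB : B → A → ℕ) (M' : Clones capA ≃ Clones capB)
  (E M : Finset (A × B))

lemma step (hreal : Realizes M' M)
    (hrA : ∀ a, Function.Injective (rA a)) (hrB : ∀ b, Function.Injective (rB b))
    (C : AltCycle M' (inEM E M M')) (hw : 0 < C.wt rA rB) (hnv : ¬ C.Valid) :
    ∃ C' : AltCycle M' (inEM E M M'), C'.m < C.m ∧ 0 < C'.wt rA rB := by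
  rw [AltCycle.Valid, Function.not_injective_iff] at hnv
  obtain ⟨t, t', hp, hne⟩ := hnv
  have hp1 : (C.f (t + 1)).1 = (C.f (t' + 1)).1 := congrArg Prod.fst hp
  have hp2 : (C.g t).1 = (C.g t').1 := congrArg Prod.snd hp
  have hw0 : 0 < (C.rot (t' + 1)).wt rA rB := by rw [AltCycle.rot_wt]; exact hw
  set s : Fin (C.m + 2) := t - (t' + 1) with hsdef
  have hks : s + (t' + 1) = t := sub_add_cancel t (t' + 1)
  have hk1 : s + 1 + (t' + 1) = t + 1 := by
    rw [add_right_comm, hks]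
  have hlastk : Fin.last (C.m + 1) + (t' + 1) = t' := by
    have h1 : Fin.last (C.m + 1) + (t' + 1) = t' + (Fin.last (C.m + 1) + 1) := add_left_comm _ _ _
    rw [h1, Fin.last_add_one, add_zero]
  have hsl : s ≠ Fin.last (C.m + 1) := by
    intro h
    apply hne
    rw [← hks, h, hlastk]
  have hpf : ((C.rot (t' + 1)).f ((s + 1 : Fin (C.m + 2)))).1 = ((C.rot (t' + 1)).f ((0 : Fin (C.m + 2)))).1 := by
    show (C.f (s + 1 + (t' + 1))).1 = (C.f (0 + (t' + 1))).1
    rw [hk1, zero_add]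
    exact hp1
  have hpg : ((C.rot (t' + 1)).g ((s : Fin (C.m + 2)))).1 = ((C.rot (t' + 1)).g ((Fin.last (C.m + 1) : Fin (C.m + 2)))).1 := by
    show (C.g (s + (t' + 1))).1 = (C.g (Fin.last (C.m + 1) + (t' + 1))).1
    rw [hks, hlastk]
    exact hp2
  exact descent rA rB M' E M hreal hrA hrB (C.rot (t' + 1)) hw0 s hsl hpf hpg

end Step

/-- if some alternating cycle `C` w.r.t. the realization `M'` in
`G'_{M'}` has `wt_{M'}(C) > 0`, then some *valid* alternating cycle `C'` (no two of
whose edges are copies of the same edge of `G`) has `wt_{M'}(C') > 0`. -/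
theorem stmt6 {A B : Type*} [Fintype A] [Fintype B] [DecidableEq A] [DecidableEq B]
    {capA : A → ℕ} {capB : B → ℕ}
    (rA : A → B → ℕ) (rB : B → A → ℕ)
    (hrA : ∀ a, Function.Injective (rA a)) (hrB : ∀ b, Function.Injective (rB b))
    (E M : Finset (A × B)) (hM : IsPerfect E M capA capB)
    (M' : Clones capA ≃ Clones capB) (hreal : Realizes M' M)
    (C : AltCycle M' (inEM E M M')) (hC : 0 < C.wt rA rB) :
    ∃ C' : AltCycle M' (inEM E M M'), C'.Valid ∧ 0 < C'.wt rA rB := by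
  suffices h : ∀ n (C : AltCycle M' (inEM E M M')), C.m ≤ n → 0 < C.wt rA rB →
      ∃ C' : AltCycle M' (inEM E M M'), C'.Valid ∧ 0 < C'.wt rA rB by
    exact h C.m C le_rfl hC
  intro n
  induction n with
  | zero =>
      intro C hm hw
      by_cases hv : C.Valid
      · exact ⟨C, hv, hw⟩
      · obtain ⟨C', hlt, _⟩ := step rA rB M' E M hreal hrA hrB C hw hv
        omega
  | succ n ih =>
      intro C hm hw
      by_cases hv : C.Valid
      · exact ⟨C, hv, hw⟩
      · obtain ⟨C', hlt, hw'⟩ := step rA rB M' E M hreal hrA hrB C hw hv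
        exact ih C' (by omega) hw'
end

section
/- Let M* be a stable matching in the colorful many-to-many multigraph G*, and let M⁰ be any one-to-one realization of M* in the colorful cloned instance G⁰_{M'}, where M' is the (colorless) projection of M⁰. Then M⁰ is a stable matching in G⁰_{M'}. -/
/-- A matching in the colorful many-to-many multigraph `G*`: a set of colored edges
`(a, b, c)` with `(a,b) ∈ E` and color `c < n₀`, at most one color per underlying
edge, respecting the capacities. -/
def ColMatching {A B : Type*} [DecidableEq A] [DecidableEq B]
    (E : Finset (A × B)) (capA : A → ℕ) (capB : B → ℕ) (n0 : ℕ)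
    (Ms : Finset (A × B × ℕ)) : Prop :=
  (∀ e ∈ Ms, (e.1, e.2.1) ∈ E ∧ e.2.2 < n0) ∧
    (∀ e ∈ Ms, ∀ f ∈ Ms, e.1 = f.1 → e.2.1 = f.2.1 → e = f) ∧
    (∀ a, (Ms.filter (fun e => e.1 = a)).card ≤ capA a) ∧
    ∀ b, (Ms.filter (fun e => e.2.1 = b)).card ≤ capB b

/-- The colored edge `(x,y)_c` blocks `Ms` in `G*`: `x` is not fully matched or
prefers `(x,y)_c` to its worst `Ms`-edge (agents prefer lower colors, then their
usual ranking), and symmetrically for `y` (jobs prefer higher colors). -/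
def ColBlocks {A B : Type*} [DecidableEq A] [DecidableEq B]
    (capA : A → ℕ) (capB : B → ℕ) (rA : A → B → ℕ) (rB : B → A → ℕ)
    (Ms : Finset (A × B × ℕ)) (x : A) (y : B) (c : ℕ) : Prop :=
  ((Ms.filter (fun e => e.1 = x)).card < capA x ∨
      ∃ f ∈ Ms, f.1 = x ∧ (c < f.2.2 ∨ (c = f.2.2 ∧ rA x y < rA x f.2.1))) ∧
    ((Ms.filter (fun e => e.2.1 = y)).card < capB y ∨
      ∃ f ∈ Ms, f.2.1 = y ∧ (f.2.2 < c ∨ (f.2.2 = c ∧ rB y x < rB y f.1)))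

/-- `Ms` is a stable matching in the colorful many-to-many multigraph `G*`: it is a
matching and no colored copy of an edge of `E` outside the projection of `Ms`
blocks it. -/
def ColStable {A B : Type*} [DecidableEq A] [DecidableEq B]
    (E : Finset (A × B)) (capA : A → ℕ) (capB : B → ℕ)
    (rA : A → B → ℕ) (rB : B → A → ℕ) (n0 : ℕ)
    (Ms : Finset (A × B × ℕ)) : Prop :=
  ColMatching E capA capB n0 Ms ∧
    ∀ x y c, (x, y) ∈ E → (x, y) ∉ Ms.image (fun e => (e.1, e.2.1)) → c < n0 →
      ¬ ColBlocks capA capB rA rB Ms x y c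

/-- `M0` is a one-to-one realization of the colored matching `Ms` on the clones:
colored clone edges projecting bijectively onto `Ms`, with each clone on at most
one edge, and the colors preserved. -/
def ColRealizes {A B : Type*} [DecidableEq A] [DecidableEq B]
    {capA : A → ℕ} {capB : B → ℕ}
    (M0 : Finset (Clones capA × Clones capB × ℕ)) (Ms : Finset (A × B × ℕ)) : Prop :=
  M0.image (fun e => (e.1.1, e.2.1.1, e.2.2)) = Ms ∧
    M0.card = Ms.card ∧
    ∀ e ∈ M0, ∀ f ∈ M0, e ≠ f → e.1 ≠ f.1 ∧ e.2.1 ≠ f.2.1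

/-- Edge set of the colorful one-to-one instance `G⁰_{M'}`: all colors `c < n₀` of
the edges of `E'_{M'}`, i.e. of the edges of `M'` (the colorless projection `Mcl` of
`M0` to clone pairs) together with all clone-copies of edges of `E` outside the
projection `Mproj` of `Ms` to `A × B`. -/
def inE0 {A B : Type*} [DecidableEq A] [DecidableEq B]
    {capA : A → ℕ} {capB : B → ℕ}
    (E : Finset (A × B)) (Mproj : Finset (A × B))
    (Mcl : Finset (Clones capA × Clones capB))
    (x : Clones capA) (y : Clones capB) (c n0 : ℕ) : Prop :=
  c < n0 ∧ ((x, y) ∈ Mcl ∨ ((x.1, y.1) ∈ E ∧ (x.1, y.1) ∉ Mproj))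

/-- The colored clone edge `(x,y)_c` blocks the one-to-one matching `M0` in
`G⁰_{M'}`: each endpoint is unmatched or prefers `(x,y)_c` to its `M0`-edge, where
clones of agents prefer lower colors, then rank, then lower clone index, and clones
of jobs prefer higher colors, then rank, then lower clone index. -/
def Blocks0 {A B : Type*} [DecidableEq A] [DecidableEq B]
    {capA : A → ℕ} {capB : B → ℕ}
    (rA : A → B → ℕ) (rB : B → A → ℕ)
    (M0 : Finset (Clones capA × Clones capB × ℕ))
    (x : Clones capA) (y : Clones capB) (c : ℕ) : Prop :=
  (∀ f ∈ M0, f.1 = x →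
      (c < f.2.2 ∨ (c = f.2.2 ∧ (rA x.1 y.1 < rA x.1 f.2.1.1 ∨
        (rA x.1 y.1 = rA x.1 f.2.1.1 ∧ (y.2 : ℕ) < (f.2.1.2 : ℕ)))))) ∧
    ∀ f ∈ M0, f.2.1 = y →
      (f.2.2 < c ∨ (f.2.2 = c ∧ (rB y.1 x.1 < rB y.1 f.1.1 ∨
        (rB y.1 x.1 = rB y.1 f.1.1 ∧ (x.2 : ℕ) < (f.1.2 : ℕ)))))

/-- `M0` is a stable matching in the colorful one-to-one instance `G⁰_{M'}`:
no edge of `G⁰_{M'}` outside `M0` blocks `M0`. -/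
def Stable0 {A B : Type*} [DecidableEq A] [DecidableEq B]
    {capA : A → ℕ} {capB : B → ℕ}
    (E : Finset (A × B)) (Mproj : Finset (A × B))
    (rA : A → B → ℕ) (rB : B → A → ℕ) (n0 : ℕ)
    (M0 : Finset (Clones capA × Clones capB × ℕ)) : Prop :=
  ∀ (x : Clones capA) (y : Clones capB) (c : ℕ),
    inE0 E Mproj (M0.image (fun e => (e.1, e.2.1))) x y c n0 →
    (x, y, c) ∉ M0 → ¬ Blocks0 rA rB M0 x y c

/-- The clones of a fixed vertex `a` are exactly `cap a` many. -/
lemma fiber_card {A : Type*} [Fintype A] [DecidableEq A] (cap : A → ℕ) (a : A) :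
    (Finset.univ.filter (fun z : Clones cap => z.1 = a)).card = cap a := by
  have himg : (Finset.univ.filter (fun z : Clones cap => z.1 = a)) =
      Finset.univ.image (fun i : Fin (cap a) => (⟨a, i⟩ : Clones cap)) := by
    ext z
    obtain ⟨a', i⟩ := z
    simp only [Finset.mem_filter, Finset.mem_univ, true_and, Finset.mem_image]
    constructor
    · rintro rfl; exact ⟨i, rfl⟩
    · rintro ⟨j, h⟩; cases h; rfl
  rw [himg, Finset.card_image_of_injective _ sigma_mk_injective, Finset.card_univ,
    Fintype.card_fin]

/-- Lemma 1: if `Ms` is a stable matching in the colorful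
many-to-many multigraph `G*` (with `n₀ = Σ_{a∈A} cap(a)` colors, agents preferring
lower colors and jobs higher colors, strict underlying preferences), then any
one-to-one realization `M0` of `Ms` is a stable matching in the colorful cloned
one-to-one instance `G⁰_{M'}`, where `M'` is the colorless projection of `M0`. -/
theorem stmt9 {A B : Type*} [Fintype A] [Fintype B] [DecidableEq A] [DecidableEq B]
    (capA : A → ℕ) (capB : B → ℕ)
    (rA : A → B → ℕ) (rB : B → A → ℕ)
    (hrA : ∀ a, Function.Injective (rA a)) (hrB : ∀ b, Function.Injective (rB b))
    (E : Finset (A × B)) (n0 : ℕ) (hn0 : n0 = ∑ a, capA a)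
    (Ms : Finset (A × B × ℕ))
    (hstable : ColStable E capA capB rA rB n0 Ms)
    (M0 : Finset (Clones capA × Clones capB × ℕ))
    (hreal : ColRealizes M0 Ms) :
    Stable0 E (Ms.image (fun e => (e.1, e.2.1))) rA rB n0 M0 := by
  obtain ⟨hmatch, hnoblock⟩ := hstable
  obtain ⟨hproj, hcard, hdist⟩ := hreal
  -- the projection map is injective on M0
  have hinj : Set.InjOn (fun e : Clones capA × Clones capB × ℕ => (e.1.1, e.2.1.1, e.2.2))
      (M0 : Set (Clones capA × Clones capB × ℕ)) :=
    Finset.card_image_iff.mp (by rw [hproj, hcard])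
  intro x y c hE0 hnotin hblk
  obtain ⟨hc, hcase⟩ := hE0
  obtain ⟨hb1, hb2⟩ := hblk
  rcases hcase with hmem | ⟨hE, hnproj⟩
  · -- the clone edge is in the projection of M0, contradiction with Blocks0
    simp only [Finset.mem_image] at hmem
    obtain ⟨f, hf, hfe⟩ := hmem
    have hx : f.1 = x := congrArg Prod.fst hfe
    have hy : f.2.1 = y := congrArg Prod.snd hfe
    have h1 := hb1 f hf hx
    have h2 := hb2 f hf hy
    rw [hy] at h1
    rcases h1 with h1 | ⟨hceq, h1⟩
    · rcases h2 with h2 | ⟨hceq', -⟩ <;> omega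
    · rcases h1 with h1 | ⟨-, h1⟩ <;> omega
  · -- otherwise (x.1, y.1, c) would block Ms in G*
    have hfmem : ∀ f ∈ M0, (f.1.1, f.2.1.1, f.2.2) ∈ Ms := by
      intro f hf
      rw [← hproj]
      exact Finset.mem_image_of_mem _ hf
    have hfproj : ∀ f ∈ M0, (f.1.1, f.2.1.1) ∈ Ms.image (fun e => (e.1, e.2.1)) := by
      intro f hf
      exact Finset.mem_image_of_mem (fun e => (e.1, e.2.1)) (hfmem f hf)
    apply hnoblock x.1 y.1 c hE hnproj hc
    constructor
    · -- agent side
      by_cases hxm : ∃ f ∈ M0, f.1 = x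
      · obtain ⟨f, hf, hfx⟩ := hxm
        right
        refine ⟨(f.1.1, f.2.1.1, f.2.2), hfmem f hf, by rw [hfx], ?_⟩
        rcases hb1 f hf hfx with h | ⟨hceq, h⟩
        · exact Or.inl h
        · refine Or.inr ⟨hceq, ?_⟩
          rcases h with h | ⟨heq, -⟩
          · exact h
          · exfalso
            apply hnproj
            have hy1 : y.1 = f.2.1.1 := hrA x.1 heq
            have := hfproj f hf
            rwa [hfx, ← hy1] at this
      · left
        -- the clone x is unmatched, so a is not fully matched in Ms
        have hfilt : (Ms.filter (fun e => e.1 = x.1)).card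
            = (M0.filter (fun f => f.1.1 = x.1)).card := by
          rw [← hproj, Finset.filter_image]
          exact Finset.card_image_of_injOn
            (hinj.mono (by intro z hz; exact (Finset.mem_filter.mp hz).1))
        have hS : ((M0.filter (fun f => f.1.1 = x.1)).image (fun f => f.1)).card
            = (M0.filter (fun f => f.1.1 = x.1)).card := by
          apply Finset.card_image_of_injOn
          intro e he f hf hef
          by_contra hne
          exact (hdist e (Finset.mem_filter.mp he).1 f (Finset.mem_filter.mp hf).1 hne).1 hef
        have hsub : (M0.filter (fun f => f.1.1 = x.1)).image (fun f => f.1)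
            ⊆ (Finset.univ.filter (fun z : Clones capA => z.1 = x.1)).erase x := by
          intro z hz
          simp only [Finset.mem_image, Finset.mem_filter] at hz
          obtain ⟨f, ⟨hf, hf1⟩, rfl⟩ := hz
          refine Finset.mem_erase.mpr ⟨?_, Finset.mem_filter.mpr ⟨Finset.mem_univ _, hf1⟩⟩
          intro h
          exact hxm ⟨f, hf, h⟩
        have hcardle := Finset.card_le_card hsub
        have herase : ((Finset.univ.filter (fun z : Clones capA => z.1 = x.1)).erase x).card
            = (Finset.univ.filter (fun z : Clones capA => z.1 = x.1)).card - 1 :=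
          Finset.card_erase_of_mem (Finset.mem_filter.mpr ⟨Finset.mem_univ _, rfl⟩)
        have hfib := fiber_card capA x.1
        have hpos : 0 < capA x.1 := x.2.pos
        omega
    · -- job side
      by_cases hym : ∃ f ∈ M0, f.2.1 = y
      · obtain ⟨f, hf, hfy⟩ := hym
        right
        refine ⟨(f.1.1, f.2.1.1, f.2.2), hfmem f hf, by rw [hfy], ?_⟩
        rcases hb2 f hf hfy with h | ⟨hceq, h⟩
        · exact Or.inl h
        · refine Or.inr ⟨hceq, ?_⟩
          rcases h with h | ⟨heq, -⟩
          · exact h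
          · exfalso
            apply hnproj
            have hx1 : x.1 = f.1.1 := hrB y.1 heq
            have := hfproj f hf
            rwa [hfy, ← hx1] at this
      · left
        have hfilt : (Ms.filter (fun e => e.2.1 = y.1)).card
            = (M0.filter (fun f => f.2.1.1 = y.1)).card := by
          rw [← hproj, Finset.filter_image]
          exact Finset.card_image_of_injOn
            (hinj.mono (by intro z hz; exact (Finset.mem_filter.mp hz).1))
        have hS : ((M0.filter (fun f => f.2.1.1 = y.1)).image (fun f => f.2.1)).card
            = (M0.filter (fun f => f.2.1.1 = y.1)).card := by
          apply Finset.card_image_of_injOn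
          intro e he f hf hef
          by_contra hne
          exact (hdist e (Finset.mem_filter.mp he).1 f (Finset.mem_filter.mp hf).1 hne).2 hef
        have hsub : (M0.filter (fun f => f.2.1.1 = y.1)).image (fun f => f.2.1)
            ⊆ (Finset.univ.filter (fun z : Clones capB => z.1 = y.1)).erase y := by
          intro z hz
          simp only [Finset.mem_image, Finset.mem_filter] at hz
          obtain ⟨f, ⟨hf, hf1⟩, rfl⟩ := hz
          refine Finset.mem_erase.mpr ⟨?_, Finset.mem_filter.mpr ⟨Finset.mem_univ _, hf1⟩⟩
          intro h
          exact hym ⟨f, hf, h⟩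
        have hcardle := Finset.card_le_card hsub
        have herase : ((Finset.univ.filter (fun z : Clones capB => z.1 = y.1)).erase y).card
            = (Finset.univ.filter (fun z : Clones capB => z.1 = y.1)).card - 1 :=
          Finset.card_erase_of_mem (Finset.mem_filter.mpr ⟨Finset.mem_univ _, rfl⟩)
        have hfib := fiber_card capB y.1
        have hpos : 0 < capB y.1 := y.2.pos
        omega
end

section
/- Let M* be a matching in the colorful many-to-many multigraph G*. If there exists a one-to-one realization M⁰ of M* that is stable in the colorful one-to-one instance G⁰_{M'} (where M' is the projection of M⁰), then M* is stable in G*. -/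
/-- Lemma 2: if `Ms` is a matching in the colorful many-to-many
multigraph `G*` and some one-to-one realization `M0` of `Ms` is stable in the
colorful cloned one-to-one instance `G⁰_{M'}` (where `M'` is the colorless
projection of `M0`), then `Ms` is stable in `G*`. -/
theorem stmt10 {A B : Type*} [Fintype A] [Fintype B] [DecidableEq A] [DecidableEq B]
    (capA : A → ℕ) (capB : B → ℕ)
    (rA : A → B → ℕ) (rB : B → A → ℕ)
    (hrA : ∀ a, Function.Injective (rA a)) (hrB : ∀ b, Function.Injective (rB b))
    (E : Finset (A × B)) (n0 : ℕ) (hn0 : n0 = ∑ a, capA a)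
    (Ms : Finset (A × B × ℕ))
    (hmatch : ColMatching E capA capB n0 Ms)
    (M0 : Finset (Clones capA × Clones capB × ℕ))
    (hreal : ColRealizes M0 Ms)
    (hstable0 : Stable0 E (Ms.image (fun e => (e.1, e.2.1))) rA rB n0 M0) :
    ColStable E capA capB rA rB n0 Ms := by
  obtain ⟨himg, hcard, hdisj⟩ := hreal
  have hinj : Set.InjOn (fun e : Clones capA × Clones capB × ℕ => (e.1.1, e.2.1.1, e.2.2))
      (M0 : Set (Clones capA × Clones capB × ℕ)) := by
    apply Finset.injOn_of_card_image_eq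
    rw [himg, hcard]
  refine ⟨hmatch, ?_⟩
  intro x y c hE hnotin hc hblk
  obtain ⟨hA, hB⟩ := hblk
  -- side A: find a suitable clone of x
  have hAclone : ∃ i : Fin (capA x), ∀ g ∈ M0, g.1 = ⟨x, i⟩ →
      (c < g.2.2 ∨ (c = g.2.2 ∧ rA x y < rA x g.2.1.1)) := by
    rcases hA with hlt | ⟨f, hf, hfx, hpref⟩
    · -- x has an unmatched clone
      set S := M0.filter (fun e => e.1.1 = x) with hS
      have hsub : S.image (fun e => (e.1.1, e.2.1.1, e.2.2)) ⊆
          Ms.filter (fun e => e.1 = x) := by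
        intro g hg
        simp only [Finset.mem_image, Finset.mem_filter, hS] at hg ⊢
        obtain ⟨e, ⟨he, hex⟩, rfl⟩ := hg
        exact ⟨himg ▸ Finset.mem_image_of_mem _ he, hex⟩
      have hScard : S.card < capA x := by
        have h1 : S.card = (S.image (fun e => (e.1.1, e.2.1.1, e.2.2))).card :=
          (Finset.card_image_of_injOn
            (hinj.mono (Finset.coe_subset.mpr (Finset.filter_subset _ _)))).symm
        calc S.card = _ := h1
          _ ≤ (Ms.filter (fun e => e.1 = x)).card := Finset.card_le_card hsub
          _ < capA x := hlt
      have hidx : ∃ i : Fin (capA x),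
          (⟨x, i⟩ : Clones capA) ∉ M0.image (fun e => e.1) := by
        by_contra h
        push_neg at h
        have hinj2 : Set.InjOn (fun i : Fin (capA x) => (⟨x, i⟩ : Clones capA))
            (Finset.univ : Finset (Fin (capA x))) := by
          intro i _ j _ hij
          simpa using hij
        have hmem : ∀ i ∈ (Finset.univ : Finset (Fin (capA x))),
            (⟨x, i⟩ : Clones capA) ∈
              (M0.image (fun e => e.1)).filter (fun z => z.1 = x) :=
          fun i _ => Finset.mem_filter.mpr ⟨h i, rfl⟩
        have hle := Finset.card_le_card_of_injOn
          (fun i : Fin (capA x) => (⟨x, i⟩ : Clones capA)) hmem hinj2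
        have hT : (M0.image (fun e => e.1)).filter (fun z => z.1 = x) ⊆
            S.image (fun e => e.1) := by
          intro z hz
          simp only [Finset.mem_filter, Finset.mem_image, hS] at hz ⊢
          obtain ⟨⟨e, he, rfl⟩, hzx⟩ := hz
          exact ⟨e, ⟨he, hzx⟩, rfl⟩
        have : capA x ≤ S.card := by
          calc capA x = (Finset.univ : Finset (Fin (capA x))).card := by simp
            _ ≤ _ := hle
            _ ≤ (S.image (fun e => e.1)).card := Finset.card_le_card hT
            _ ≤ S.card := Finset.card_image_le
        exact absurd (lt_of_le_of_lt this hScard) (lt_irrefl _)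
      obtain ⟨i, hi⟩ := hidx
      refine ⟨i, fun g hg hg1 => absurd ?_ hi⟩
      exact Finset.mem_image.mpr ⟨g, hg, hg1⟩
    · -- x's Ms-edge f is worse; take the clone of x matched to f in M0
      rw [← himg] at hf
      obtain ⟨e, he, hpe⟩ := Finset.mem_image.mp hf
      obtain ⟨⟨ea, ei⟩, ey, ec⟩ := e
      simp only at hpe
      subst hpe
      simp only at hfx hpref
      subst hfx
      refine ⟨ei, fun g hg hg1 => ?_⟩
      have hge : g = (⟨ea, ei⟩, ey, ec) := by
        by_contra h
        exact (hdisj g hg _ he h).1 hg1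
      subst hge
      exact hpref
  -- side B: find a suitable clone of y
  have hBclone : ∃ j : Fin (capB y), ∀ g ∈ M0, g.2.1 = ⟨y, j⟩ →
      (g.2.2 < c ∨ (g.2.2 = c ∧ rB y x < rB y g.1.1)) := by
    rcases hB with hlt | ⟨f, hf, hfy, hpref⟩
    · set S := M0.filter (fun e => e.2.1.1 = y) with hS
      have hsub : S.image (fun e => (e.1.1, e.2.1.1, e.2.2)) ⊆
          Ms.filter (fun e => e.2.1 = y) := by
        intro g hg
        simp only [Finset.mem_image, Finset.mem_filter, hS] at hg ⊢
        obtain ⟨e, ⟨he, hey⟩, rfl⟩ := hg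
        exact ⟨himg ▸ Finset.mem_image_of_mem _ he, hey⟩
      have hScard : S.card < capB y := by
        have h1 : S.card = (S.image (fun e => (e.1.1, e.2.1.1, e.2.2))).card :=
          (Finset.card_image_of_injOn
            (hinj.mono (Finset.coe_subset.mpr (Finset.filter_subset _ _)))).symm
        calc S.card = _ := h1
          _ ≤ (Ms.filter (fun e => e.2.1 = y)).card := Finset.card_le_card hsub
          _ < capB y := hlt
      have hidx : ∃ j : Fin (capB y),
          (⟨y, j⟩ : Clones capB) ∉ M0.image (fun e => e.2.1) := by
        by_contra h
        push_neg at h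
        have hinj2 : Set.InjOn (fun j : Fin (capB y) => (⟨y, j⟩ : Clones capB))
            (Finset.univ : Finset (Fin (capB y))) := by
          intro i _ j _ hij
          simpa using hij
        have hmem : ∀ j ∈ (Finset.univ : Finset (Fin (capB y))),
            (⟨y, j⟩ : Clones capB) ∈
              (M0.image (fun e => e.2.1)).filter (fun z => z.1 = y) :=
          fun j _ => Finset.mem_filter.mpr ⟨h j, rfl⟩
        have hle := Finset.card_le_card_of_injOn
          (fun j : Fin (capB y) => (⟨y, j⟩ : Clones capB)) hmem hinj2
        have hT : (M0.image (fun e => e.2.1)).filter (fun z => z.1 = y) ⊆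
            S.image (fun e => e.2.1) := by
          intro z hz
          simp only [Finset.mem_filter, Finset.mem_image, hS] at hz ⊢
          obtain ⟨⟨e, he, rfl⟩, hzy⟩ := hz
          exact ⟨e, ⟨he, hzy⟩, rfl⟩
        have : capB y ≤ S.card := by
          calc capB y = (Finset.univ : Finset (Fin (capB y))).card := by simp
            _ ≤ _ := hle
            _ ≤ (S.image (fun e => e.2.1)).card := Finset.card_le_card hT
            _ ≤ S.card := Finset.card_image_le
        exact absurd (lt_of_le_of_lt this hScard) (lt_irrefl _)
      obtain ⟨j, hj⟩ := hidx
      refine ⟨j, fun g hg hg1 => absurd ?_ hj⟩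
      exact Finset.mem_image.mpr ⟨g, hg, hg1⟩
    · rw [← himg] at hf
      obtain ⟨e, he, hpe⟩ := Finset.mem_image.mp hf
      obtain ⟨ex, ⟨eb, ej⟩, ec⟩ := e
      simp only at hpe
      subst hpe
      simp only at hfy hpref
      subst hfy
      refine ⟨ej, fun g hg hg1 => ?_⟩
      have hge : g = (ex, ⟨eb, ej⟩, ec) := by
        by_contra h
        exact (hdisj g hg _ he h).2 hg1
      subst hge
      exact hpref
  obtain ⟨i, hAi⟩ := hAclone
  obtain ⟨j, hBj⟩ := hBclone
  have hnotmem : ((⟨x, i⟩ : Clones capA), (⟨y, j⟩ : Clones capB), c) ∉ M0 := by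
    intro hm
    have h1 : (x, y, c) ∈ Ms := himg ▸ Finset.mem_image_of_mem _ hm
    exact hnotin (Finset.mem_image_of_mem (fun e => (e.1, e.2.1)) h1)
  refine hstable0 ⟨x, i⟩ ⟨y, j⟩ c ⟨hc, Or.inr ⟨hE, hnotin⟩⟩ hnotmem ?_
  constructor
  · intro g hg hg1
    exact (hAi g hg hg1).imp id (fun ⟨h, h'⟩ => ⟨h, Or.inl h'⟩)
  · intro g hg hg1
    exact (hBj g hg hg1).imp id (fun ⟨h, h'⟩ => ⟨h, Or.inl h'⟩)
end

section
/- Let M be a popular perfect matching in a many-to-many instance G, M' a one-to-one realization of M in G'_{M'}, and N any perfect matching in G. Then there exists a one-to-one realization N' of N inside the graph G'_{M'} (i.e., N' uses only edges of E'_{M'}) such that Δ(M',N') = Σ_{v ∈ A∪B} vote_v(M,N), where Δ(M',N') is the one-to-one vote difference. -/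
/-- The one-to-one vote difference `Δ(M',N')` in the cloned instance. -/
def Delta' {A B : Type*} [Fintype A] [Fintype B] {capA : A → ℕ} {capB : B → ℕ}
    (rA : A → B → ℕ) (rB : B → A → ℕ)
    (M' N' : Clones capA ≃ Clones capB) : ℤ :=
  (∑ x : Clones capA,
      lsgn (rA x.1 (M' x).1) (M' x).2 (rA x.1 (N' x).1) (N' x).2) +
    ∑ y : Clones capB,
      lsgn (rB y.1 (M'.symm y).1) (M'.symm y).2 (rB y.1 (N'.symm y).1) (N'.symm y).2

namespace S16

lemma lsgn_self (r j : ℕ) : lsgn r j r j = 0 := by simp [lsgn]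

lemma lsgn_eq_vsgn {r r' : ℕ} (j j' : ℕ) (h : r ≠ r') : lsgn r j r' j' = vsgn r r' := by
  rcases lt_or_gt_of_ne h with h1 | h1 <;>
    simp [lsgn, vsgn, h1, h1.ne, h1.ne', not_lt_of_gt h1]

variable {A B : Type*} [DecidableEq A] [DecidableEq B]

lemma mem_jobsOf {M : Finset (A × B)} {a : A} {b : B} :
    b ∈ jobsOf M a ↔ (a, b) ∈ M := by
  simp only [jobsOf, Finset.mem_image, Finset.mem_filter]
  constructor
  · rintro ⟨⟨a', b'⟩, ⟨hM, rfl⟩, rfl⟩; exact hM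
  · intro h; exact ⟨(a, b), ⟨h, rfl⟩, rfl⟩

lemma mem_agentsOf {M : Finset (A × B)} {a : A} {b : B} :
    a ∈ agentsOf M b ↔ (a, b) ∈ M := by
  simp only [agentsOf, Finset.mem_image, Finset.mem_filter]
  constructor
  · rintro ⟨⟨a', b'⟩, ⟨hM, rfl⟩, rfl⟩; exact hM
  · intro h; exact ⟨(a, b), ⟨h, rfl⟩, rfl⟩

lemma card_jobsOf (M : Finset (A × B)) (a : A) :
    (jobsOf M a).card = (M.filter (fun e => e.1 = a)).card := by
  apply Finset.card_image_of_injOn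
  intro e he e' he' h
  simp only [Finset.coe_filter, Set.mem_setOf_eq] at he he'
  exact Prod.ext (he.2.trans he'.2.symm) h

lemma card_agentsOf (M : Finset (A × B)) (b : B) :
    (agentsOf M b).card = (M.filter (fun e => e.2 = b)).card := by
  apply Finset.card_image_of_injOn
  intro e he e' he' h
  simp only [Finset.coe_filter, Set.mem_setOf_eq] at he he'
  exact Prod.ext h (he.2.trans he'.2.symm)

section ext

variable {β : Type*} [DecidableEq β] {S T : Finset β}

/-- total version of a bijection `S \ T ≃ T \ S` -/
def totσ (σ : {x // x ∈ S \ T} ≃ {x // x ∈ T \ S}) (b : β) : β :=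
  if h : b ∈ S \ T then (σ ⟨b, h⟩).1 else b

/-- extension of a bijection `S \ T ≃ T \ S` to a bijection `S ≃ T`,
identity on `S ∩ T`. -/
def extEquiv (σ : {x // x ∈ S \ T} ≃ {x // x ∈ T \ S}) :
    {x // x ∈ S} ≃ {x // x ∈ T} where
  toFun x := if h : x.1 ∈ T then ⟨x.1, h⟩
    else ⟨(σ ⟨x.1, Finset.mem_sdiff.2 ⟨x.2, h⟩⟩).1,
      (Finset.mem_sdiff.1 (σ ⟨x.1, Finset.mem_sdiff.2 ⟨x.2, h⟩⟩).2).1⟩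
  invFun y := if h : y.1 ∈ S then ⟨y.1, h⟩
    else ⟨(σ.symm ⟨y.1, Finset.mem_sdiff.2 ⟨y.2, h⟩⟩).1,
      (Finset.mem_sdiff.1 (σ.symm ⟨y.1, Finset.mem_sdiff.2 ⟨y.2, h⟩⟩).2).1⟩
  left_inv x := by
    by_cases h : x.1 ∈ T
    · simp only [dif_pos h, dif_pos x.2]
    · simp only [dif_neg h]
      have hm := (σ ⟨x.1, Finset.mem_sdiff.2 ⟨x.2, h⟩⟩).2
      rw [dif_neg (Finset.mem_sdiff.1 hm).2]
      apply Subtype.ext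
      show (σ.symm (σ ⟨x.1, Finset.mem_sdiff.2 ⟨x.2, h⟩⟩)).1 = x.1
      rw [Equiv.symm_apply_apply]
  right_inv y := by
    by_cases h : y.1 ∈ S
    · simp only [dif_pos h, dif_pos y.2]
    · simp only [dif_neg h]
      have hm := (σ.symm ⟨y.1, Finset.mem_sdiff.2 ⟨y.2, h⟩⟩).2
      rw [dif_neg (Finset.mem_sdiff.1 hm).2]
      apply Subtype.ext
      show (σ (σ.symm ⟨y.1, Finset.mem_sdiff.2 ⟨y.2, h⟩⟩)).1 = y.1
      rw [Equiv.apply_symm_apply]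

lemma extEquiv_coe (σ : {x // x ∈ S \ T} ≃ {x // x ∈ T \ S}) (x : {x // x ∈ S}) :
    ((extEquiv σ x : {x // x ∈ T}) : β) = totσ σ x.1 := by
  by_cases h : x.1 ∈ T
  · simp [extEquiv, totσ, dif_pos h, dif_neg (fun hc => (Finset.mem_sdiff.1 hc).2 h)]
  · simp [extEquiv, totσ, dif_neg h, dif_pos (Finset.mem_sdiff.2 ⟨x.2, h⟩)]

lemma extEquiv_symm (σ : {x // x ∈ S \ T} ≃ {x // x ∈ T \ S}) :
    (extEquiv σ).symm = extEquiv σ.symm := rfl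

lemma sum_vote (r : β → ℕ) (σ : {x // x ∈ S \ T} ≃ {x // x ∈ T \ S}) :
    (∑ u : {x // x ∈ S}, if (u : β) ∈ T then (0:ℤ) else vsgn (r u) (r (totσ σ u)))
      = ∑ u : {x // x ∈ S \ T}, vsgn (r u.1) (r (σ u).1) := by
  have h1 : ∀ u : {x // x ∈ S \ T},
      (if (u : β) ∈ T then (0:ℤ) else vsgn (r u) (r (totσ σ u)))
        = vsgn (r u.1) (r (σ u).1) := by
    intro u
    have hu := Finset.mem_sdiff.1 u.2
    rw [if_neg hu.2]
    simp only [totσ]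
    rw [dif_pos u.2]
  have h2 : (∑ b ∈ S, if b ∈ T then (0:ℤ) else vsgn (r b) (r (totσ σ b)))
      = ∑ b ∈ S \ T, (if b ∈ T then (0:ℤ) else vsgn (r b) (r (totσ σ b))) := by
    rw [Finset.sdiff_eq_filter, Finset.sum_filter]
    apply Finset.sum_congr rfl
    intro b _
    by_cases h : b ∈ T <;> simp [h]
  rw [Finset.sum_coe_sort S (fun b => if b ∈ T then (0:ℤ) else vsgn (r b) (r (totσ σ b))),
    h2, ← Finset.sum_coe_sort (S \ T)
      (fun b => if b ∈ T then (0:ℤ) else vsgn (r b) (r (totσ σ b)))]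
  exact Fintype.sum_congr _ _ h1

end ext

/-- flip an edge of N -/
def flipN (N : Finset (A × B)) :
    ((a : A) × {b // b ∈ jobsOf N a}) ≃ ((b : B) × {a // a ∈ agentsOf N b}) where
  toFun p := ⟨p.2.1, p.1, mem_agentsOf.2 (mem_jobsOf.1 p.2.2)⟩
  invFun p := ⟨p.2.1, p.1, mem_jobsOf.2 (mem_agentsOf.1 p.2.2)⟩
  left_inv _ := rfl
  right_inv _ := rfl

end S16


namespace S16
section main

variable {A B : Type*} [DecidableEq A] [DecidableEq B] {capA : A → ℕ} {capB : B → ℕ}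
  {M N : Finset (A × B)} (M' : Clones capA ≃ Clones capB)

variable (hreal : Realizes M' M)
  (hMa : ∀ a, (jobsOf M a).card = capA a)
  (hMb : ∀ b, (agentsOf M b).card = capB b)

/-- clones of `a` are in bijection with `M(a)` via `M'`. -/
noncomputable def eA (a : A) : Fin (capA a) ≃ {b // b ∈ jobsOf M a} :=
  Equiv.ofBijective (fun i => ⟨(M' ⟨a, i⟩).1, mem_jobsOf.2 (hreal.1 ⟨a, i⟩)⟩)
    (by
      rw [Fintype.bijective_iff_injective_and_card]
      constructor
      · intro i j hij
        by_contra hne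
        exact hreal.2 ⟨a, i⟩ ⟨a, j⟩ (by simp [hne]) rfl (congrArg Subtype.val hij)
      · simp [Fintype.card_coe, hMa a])

/-- clones of `b` are in bijection with `M(b)` via `M'.symm`. -/
noncomputable def eB (b : B) : Fin (capB b) ≃ {a // a ∈ agentsOf M b} :=
  Equiv.ofBijective (fun j => ⟨(M'.symm ⟨b, j⟩).1, mem_agentsOf.2 (by
      have h := hreal.1 (M'.symm ⟨b, j⟩)
      rwa [Equiv.apply_symm_apply] at h)⟩)
    (by
      rw [Fintype.bijective_iff_injective_and_card]
      constructor
      · intro i j hij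
        by_contra hne
        have h2 : M'.symm ⟨b, i⟩ ≠ M'.symm ⟨b, j⟩ := fun hc => hne (by
          have := congrArg M' hc
          simp only [Equiv.apply_symm_apply] at this
          exact (Sigma.mk.inj_iff.1 this).2.eq)
        have := hreal.2 _ _ h2 (congrArg Subtype.val hij)
        simp only [Equiv.apply_symm_apply] at this
        exact this rfl
      · simp [Fintype.card_coe, hMb b])

variable (σA : ∀ a, {x // x ∈ jobsOf M a \ jobsOf N a} ≃ {x // x ∈ jobsOf N a \ jobsOf M a})
  (σB : ∀ b, {x // x ∈ agentsOf M b \ agentsOf N b} ≃ {x // x ∈ agentsOf N b \ agentsOf M b})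

/-- the realization `N'` of `N`. -/
noncomputable def Nmk : Clones capA ≃ Clones capB :=
  (Equiv.sigmaCongrRight (eA M' hreal hMa)).trans <|
    (Equiv.sigmaCongrRight fun a => extEquiv (σA a)).trans <|
      (flipN N).trans <|
        ((Equiv.sigmaCongrRight fun b => extEquiv (σB b)).symm).trans
          (Equiv.sigmaCongrRight (eB M' hreal hMb)).symm

lemma Nmk_fst (x : Clones capA) :
    (Nmk M' hreal hMa hMb σA σB x).1 = totσ (σA x.1) (M' x).1 := by
  rw [show (Nmk M' hreal hMa hMb σA σB x).1
      = ((extEquiv (σA x.1) (eA M' hreal hMa x.1 x.2) : {b // b ∈ jobsOf N x.1}) : B)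
      from rfl, extEquiv_coe]
  rfl

lemma Nmk_fst_memN (x : Clones capA) :
    (Nmk M' hreal hMa hMb σA σB x).1 ∈ jobsOf N x.1 :=
  (extEquiv (σA x.1) (eA M' hreal hMa x.1 x.2)).2

lemma Nmk_symm_fst (y : Clones capB) :
    ((Nmk M' hreal hMa hMb σA σB).symm y).1 = totσ (σB y.1) (M'.symm y).1 := by
  rw [show ((Nmk M' hreal hMa hMb σA σB).symm y).1
      = ((extEquiv (σB y.1) (eB M' hreal hMb y.1 y.2) : {a // a ∈ agentsOf N y.1}) : A)
      from rfl, extEquiv_coe]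
  rfl

include hreal in
lemma clone_ext (y y' : Clones capB) (h1 : y.1 = y'.1)
    (h2 : (M'.symm y).1 = (M'.symm y').1) : y = y' := by
  by_contra hne
  have h3 : M'.symm y ≠ M'.symm y' := fun hc => hne (by
    rw [← M'.apply_symm_apply y, hc, M'.apply_symm_apply])
  have h4 := hreal.2 _ _ h3 h2
  simp only [Equiv.apply_symm_apply] at h4
  exact h4 h1

lemma Nmk_Msymm_fst (x : Clones capA) :
    (M'.symm (Nmk M' hreal hMa hMb σA σB x)).1
      = totσ (σB (Nmk M' hreal hMa hMb σA σB x).1).symm x.1 := by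
  have h5 : (eB M' hreal hMb (Nmk M' hreal hMa hMb σA σB x).1)
        (Nmk M' hreal hMa hMb σA σB x).2
      = (extEquiv (σB (Nmk M' hreal hMa hMb σA σB x).1)).symm
          ⟨x.1, mem_agentsOf.2 (mem_jobsOf.1 (Nmk_fst_memN M' hreal hMa hMb σA σB x))⟩ :=
    Equiv.apply_symm_apply _ _
  calc (M'.symm (Nmk M' hreal hMa hMb σA σB x)).1
      = ((eB M' hreal hMb (Nmk M' hreal hMa hMb σA σB x).1)
          (Nmk M' hreal hMa hMb σA σB x).2 : A) := rfl
    _ = ((extEquiv (σB (Nmk M' hreal hMa hMb σA σB x).1)).symm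
          ⟨x.1, mem_agentsOf.2 (mem_jobsOf.1 (Nmk_fst_memN M' hreal hMa hMb σA σB x))⟩ : A) :=
        congrArg Subtype.val h5
    _ = totσ (σB (Nmk M' hreal hMa hMb σA σB x).1).symm x.1 := by
        rw [extEquiv_symm, extEquiv_coe]

lemma Nmk_eq_of_common (x : Clones capA) (h : (M' x).1 ∈ jobsOf N x.1) :
    Nmk M' hreal hMa hMb σA σB x = M' x := by
  have hfst : (Nmk M' hreal hMa hMb σA σB x).1 = (M' x).1 := by
    rw [Nmk_fst]
    simp only [totσ]
    rw [dif_neg]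
    intro hc
    exact (Finset.mem_sdiff.1 hc).2 h
  apply clone_ext M' hreal _ _ hfst
  rw [Nmk_Msymm_fst, M'.symm_apply_apply]
  simp only [totσ, hfst]
  rw [dif_neg]
  intro hc
  exact (Finset.mem_sdiff.1 hc).2 (mem_agentsOf.2 (hreal.1 x))

lemma Nmk_symm_eq_of_common (y : Clones capB) (h : (M'.symm y).1 ∈ agentsOf N y.1) :
    (Nmk M' hreal hMa hMb σA σB).symm y = M'.symm y := by
  have h2 := Nmk_eq_of_common M' hreal hMa hMb σA σB (M'.symm y) (by
    rw [Equiv.apply_symm_apply]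
    exact mem_jobsOf.2 (mem_agentsOf.1 h))
  rw [Equiv.apply_symm_apply] at h2
  rw [Equiv.symm_apply_eq]
  exact h2.symm

end main

end S16

/-- let `M` be a popular perfect matching in a many-to-many instance
`G`, `M'` a one-to-one realization of `M`, and `N` any perfect matching of `G`.
Then there is a one-to-one realization `N'` of `N` using only edges of `G'_{M'}`
such that `Δ(M',N') = Σ_{v ∈ A∪B} vote_v(M,N)` (the right-hand side being the sum of
the minimum vote values `za`, `zb`). -/
theorem stmt16 {A B : Type*} [Fintype A] [Fintype B] [DecidableEq A] [DecidableEq B]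
    (capA : A → ℕ) (capB : B → ℕ)
    (rA : A → B → ℕ) (rB : B → A → ℕ)
    (hrA : ∀ a, Function.Injective (rA a)) (hrB : ∀ b, Function.Injective (rB b))
    (E M N : Finset (A × B))
    (hpop : PopularPerfect E capA capB rA rB M)
    (hN : IsPerfect E N capA capB)
    (M' : Clones capA ≃ Clones capB) (hreal : Realizes M' M)
    (za : A → ℤ) (zb : B → ℤ)
    (hza : ∀ a, IsLeast
      (voteSet (rA a) (jobsOf M a \ jobsOf N a) (jobsOf N a \ jobsOf M a)) (za a))
    (hzb : ∀ b, IsLeast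
      (voteSet (rB b) (agentsOf M b \ agentsOf N b) (agentsOf N b \ agentsOf M b)) (zb b)) :
    ∃ N' : Clones capA ≃ Clones capB, Realizes N' N ∧
      (∀ x, inEM E M M' x (N' x)) ∧
      Delta' rA rB M' N' = (∑ a, za a) + ∑ b, zb b := by
  classical
  obtain ⟨hMperf, -⟩ := hpop
  have hMa : ∀ a, (jobsOf M a).card = capA a :=
    fun a => (S16.card_jobsOf M a).trans (hMperf.2.1 a)
  have hMb : ∀ b, (agentsOf M b).card = capB b :=
    fun b => (S16.card_agentsOf M b).trans (hMperf.2.2 b)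
  choose σA hσA using fun a => (hza a).1
  choose σB hσB using fun b => (hzb b).1
  refine ⟨S16.Nmk M' hreal hMa hMb σA σB, ⟨?_, ?_⟩, ?_, ?_⟩
  · exact fun x => S16.mem_jobsOf.1 (S16.Nmk_fst_memN M' hreal hMa hMb σA σB x)
  · rintro ⟨a, i⟩ ⟨a', j⟩ hne hfst heq
    dsimp only at hfst
    subst hfst
    apply hne
    have h1 : (S16.extEquiv (σA a)) (S16.eA M' hreal hMa a i)
        = (S16.extEquiv (σA a)) (S16.eA M' hreal hMa a j) := Subtype.ext heq
    have h3 := (S16.eA M' hreal hMa a).injective ((S16.extEquiv (σA a)).injective h1)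
    rw [h3]
  · intro x
    by_cases h : (M' x).1 ∈ jobsOf N x.1
    · exact Or.inl (S16.Nmk_eq_of_common M' hreal hMa hMb σA σB x h).symm
    · refine Or.inr ⟨hN.1 (S16.mem_jobsOf.1 (S16.Nmk_fst_memN M' hreal hMa hMb σA σB x)), ?_⟩
      intro hc
      have h2 : (S16.Nmk M' hreal hMa hMb σA σB x).1 ∈ jobsOf N x.1 \ jobsOf M x.1 := by
        rw [S16.Nmk_fst]
        simp only [S16.totσ]
        rw [dif_pos (Finset.mem_sdiff.2 ⟨S16.mem_jobsOf.2 (hreal.1 x), h⟩)]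
        exact (σA x.1 _).2
      exact (Finset.mem_sdiff.1 h2).2 (S16.mem_jobsOf.2 hc)
  · have hA : (∑ x : Clones capA,
        lsgn (rA x.1 (M' x).1) (M' x).2
          (rA x.1 ((S16.Nmk M' hreal hMa hMb σA σB) x).1)
          ((S16.Nmk M' hreal hMa hMb σA σB) x).2) = ∑ a, za a := by
      have hpt : ∀ x : Clones capA,
          lsgn (rA x.1 (M' x).1) (M' x).2
            (rA x.1 ((S16.Nmk M' hreal hMa hMb σA σB) x).1)
            ((S16.Nmk M' hreal hMa hMb σA σB) x).2
          = (if (M' x).1 ∈ jobsOf N x.1 then (0:ℤ)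
              else vsgn (rA x.1 (M' x).1) (rA x.1 (S16.totσ (σA x.1) (M' x).1))) := by
        intro x
        by_cases h : (M' x).1 ∈ jobsOf N x.1
        · rw [if_pos h, S16.Nmk_eq_of_common M' hreal hMa hMb σA σB x h, S16.lsgn_self]
        · rw [if_neg h]
          have hfst := S16.Nmk_fst M' hreal hMa hMb σA σB x
          have hne : rA x.1 (M' x).1 ≠ rA x.1 ((S16.Nmk M' hreal hMa hMb σA σB) x).1 := by
            rw [hfst]
            intro hre
            have h1 := hrA x.1 hre
            have hmem : (M' x).1 ∈ jobsOf M x.1 \ jobsOf N x.1 :=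
              Finset.mem_sdiff.2 ⟨S16.mem_jobsOf.2 (hreal.1 x), h⟩
            have h2 : S16.totσ (σA x.1) (M' x).1 ∈ jobsOf N x.1 \ jobsOf M x.1 := by
              simp only [S16.totσ]
              rw [dif_pos hmem]
              exact (σA x.1 _).2
            rw [← h1] at h2
            exact h (Finset.mem_sdiff.1 h2).1
          rw [S16.lsgn_eq_vsgn _ _ hne, hfst]
      calc (∑ x : Clones capA,
            lsgn (rA x.1 (M' x).1) (M' x).2
              (rA x.1 ((S16.Nmk M' hreal hMa hMb σA σB) x).1)
              ((S16.Nmk M' hreal hMa hMb σA σB) x).2)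
          = ∑ x : Clones capA, (if (M' x).1 ∈ jobsOf N x.1 then (0:ℤ)
              else vsgn (rA x.1 (M' x).1) (rA x.1 (S16.totσ (σA x.1) (M' x).1))) :=
            Finset.sum_congr rfl fun x _ => hpt x
        _ = ∑ a, ∑ i : Fin (capA a), (if (M' ⟨a, i⟩).1 ∈ jobsOf N a then (0:ℤ)
              else vsgn (rA a (M' ⟨a, i⟩).1) (rA a (S16.totσ (σA a) (M' ⟨a, i⟩).1))) := by
            rw [← Finset.univ_sigma_univ, Finset.sum_sigma]
        _ = ∑ a, za a := by
            refine Finset.sum_congr rfl fun a _ => ?_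
            have e1 : (∑ i : Fin (capA a), (if (M' ⟨a, i⟩).1 ∈ jobsOf N a then (0:ℤ)
                  else vsgn (rA a (M' ⟨a, i⟩).1) (rA a (S16.totσ (σA a) (M' ⟨a, i⟩).1))))
                = ∑ u : {x // x ∈ jobsOf M a}, (if (u : B) ∈ jobsOf N a then (0:ℤ)
                  else vsgn (rA a u) (rA a (S16.totσ (σA a) u))) :=
              Equiv.sum_comp (S16.eA M' hreal hMa a)
                (fun u => if (u : B) ∈ jobsOf N a then (0:ℤ)
                  else vsgn (rA a u) (rA a (S16.totσ (σA a) u)))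
            rw [e1, S16.sum_vote (rA a) (σA a)]
            exact (hσA a).symm
    have hB : (∑ y : Clones capB,
        lsgn (rB y.1 (M'.symm y).1) (M'.symm y).2
          (rB y.1 ((S16.Nmk M' hreal hMa hMb σA σB).symm y).1)
          ((S16.Nmk M' hreal hMa hMb σA σB).symm y).2) = ∑ b, zb b := by
      have hpt : ∀ y : Clones capB,
          lsgn (rB y.1 (M'.symm y).1) (M'.symm y).2
            (rB y.1 ((S16.Nmk M' hreal hMa hMb σA σB).symm y).1)
            ((S16.Nmk M' hreal hMa hMb σA σB).symm y).2
          = (if (M'.symm y).1 ∈ agentsOf N y.1 then (0:ℤ)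
              else vsgn (rB y.1 (M'.symm y).1) (rB y.1 (S16.totσ (σB y.1) (M'.symm y).1))) := by
        intro y
        have hmemM : (M'.symm y).1 ∈ agentsOf M y.1 := S16.mem_agentsOf.2 (by
          have h := hreal.1 (M'.symm y)
          rwa [Equiv.apply_symm_apply] at h)
        by_cases h : (M'.symm y).1 ∈ agentsOf N y.1
        · rw [if_pos h, S16.Nmk_symm_eq_of_common M' hreal hMa hMb σA σB y h, S16.lsgn_self]
        · rw [if_neg h]
          have hfst := S16.Nmk_symm_fst M' hreal hMa hMb σA σB y
          have hne : rB y.1 (M'.symm y).1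
              ≠ rB y.1 ((S16.Nmk M' hreal hMa hMb σA σB).symm y).1 := by
            rw [hfst]
            intro hre
            have h1 := hrB y.1 hre
            have hmem : (M'.symm y).1 ∈ agentsOf M y.1 \ agentsOf N y.1 :=
              Finset.mem_sdiff.2 ⟨hmemM, h⟩
            have h2 : S16.totσ (σB y.1) (M'.symm y).1 ∈ agentsOf N y.1 \ agentsOf M y.1 := by
              simp only [S16.totσ]
              rw [dif_pos hmem]
              exact (σB y.1 _).2
            rw [← h1] at h2
            exact h (Finset.mem_sdiff.1 h2).1
          rw [S16.lsgn_eq_vsgn _ _ hne, hfst]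
      calc (∑ y : Clones capB,
            lsgn (rB y.1 (M'.symm y).1) (M'.symm y).2
              (rB y.1 ((S16.Nmk M' hreal hMa hMb σA σB).symm y).1)
              ((S16.Nmk M' hreal hMa hMb σA σB).symm y).2)
          = ∑ y : Clones capB, (if (M'.symm y).1 ∈ agentsOf N y.1 then (0:ℤ)
              else vsgn (rB y.1 (M'.symm y).1) (rB y.1 (S16.totσ (σB y.1) (M'.symm y).1))) :=
            Finset.sum_congr rfl fun y _ => hpt y
        _ = ∑ b, ∑ j : Fin (capB b), (if (M'.symm ⟨b, j⟩).1 ∈ agentsOf N b then (0:ℤ)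
              else vsgn (rB b (M'.symm ⟨b, j⟩).1) (rB b (S16.totσ (σB b) (M'.symm ⟨b, j⟩).1))) := by
            rw [← Finset.univ_sigma_univ, Finset.sum_sigma]
        _ = ∑ b, zb b := by
            refine Finset.sum_congr rfl fun b _ => ?_
            have e1 : (∑ j : Fin (capB b), (if (M'.symm ⟨b, j⟩).1 ∈ agentsOf N b then (0:ℤ)
                  else vsgn (rB b (M'.symm ⟨b, j⟩).1) (rB b (S16.totσ (σB b) (M'.symm ⟨b, j⟩).1))))
                = ∑ u : {x // x ∈ agentsOf M b}, (if (u : A) ∈ agentsOf N b then (0:ℤ)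
                  else vsgn (rB b u) (rB b (S16.totσ (σB b) u))) :=
              Equiv.sum_comp (S16.eB M' hreal hMb b)
                (fun u => if (u : A) ∈ agentsOf N b then (0:ℤ)
                  else vsgn (rB b u) (rB b (S16.totσ (σB b) u)))
            rw [e1, S16.sum_vote (rB b) (σB b)]
            exact (hσB b).symm
    show (∑ x : Clones capA, _) + (∑ y : Clones capB, _) = _
    rw [hA, hB]
end

section
/- In a one-to-one bipartite instance with strict preferences, every stable matching is popular: if S is stable, then Δ(S, N) ≥ 0 for every matching N. -/
/-- Vote of a vertex comparing two (possibly absent) partners, given its rank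
function (lower rank = preferred); being unmatched is worse than any partner. -/
def voteOpt {B : Type*} (r : B → ℕ) : Option B → Option B → ℤ
  | some u, some u' => if r u < r u' then 1 else if r u' < r u then -1 else 0
  | some _, none => 1
  | none, some _ => -1
  | none, none => 0

lemma voteOpt_vs_some {B : Type*} (r : B → ℕ) (hr : Function.Injective r)
    (x : Option B) (u : B) (hx : x ≠ some u) :
    voteOpt r x (some u) = 1 ∨
      (voteOpt r x (some u) = -1 ∧ (x = none ∨ ∃ u', x = some u' ∧ r u < r u')) := by
  cases x with
  | none => exact Or.inr ⟨rfl, Or.inl rfl⟩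
  | some u' =>
    have hne : r u' ≠ r u := fun h => hx (by rw [hr h])
    rcases hne.lt_or_gt with h | h
    · left; simp [voteOpt, h]
    · right
      refine ⟨?_, Or.inr ⟨u', rfl, h⟩⟩
      simp [voteOpt, h, not_lt.mpr h.le]

lemma voteOpt_none_nonneg {B : Type*} (r : B → ℕ) (x : Option B) :
    0 ≤ voteOpt r x none := by
  cases x <;> simp [voteOpt]

/-- Gärdenfors: in a one-to-one bipartite instance with strict
preferences, every stable matching `S` (given by partner functions `pSa`, `pSb`) is
popular: `Δ(S,N) ≥ 0` for every matching `N`. -/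
theorem stmt17 {A B : Type*} [Fintype A] [Fintype B]
    (E : A → B → Prop)
    (rA : A → B → ℕ) (rB : B → A → ℕ)
    (hrA : ∀ a, Function.Injective (rA a)) (hrB : ∀ b, Function.Injective (rB b))
    (pSa : A → Option B) (pSb : B → Option A)
    (hScons : ∀ a b, pSa a = some b ↔ pSb b = some a)
    (hSE : ∀ a b, pSa a = some b → E a b)
    (hstable : ¬ ∃ a b, E a b ∧ pSa a ≠ some b ∧
        (pSa a = none ∨ ∃ b', pSa a = some b' ∧ rA a b < rA a b') ∧
        (pSb b = none ∨ ∃ a', pSb b = some a' ∧ rB b a < rB b a'))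
    (pNa : A → Option B) (pNb : B → Option A)
    (hNcons : ∀ a b, pNa a = some b ↔ pNb b = some a)
    (hNE : ∀ a b, pNa a = some b → E a b) :
    0 ≤ (∑ a, voteOpt (rA a) (pSa a) (pNa a)) +
      ∑ b, voteOpt (rB b) (pSb b) (pNb b) := by
  classical
  push_neg at hstable
  set f : A → ℤ := fun a => voteOpt (rA a) (pSa a) (pNa a) with hf
  set g : B → ℤ := fun b => voteOpt (rB b) (pSb b) (pNb b) with hg
  have key : ∀ a b, pNa a = some b → 0 ≤ f a + g b := by
    intro a b hab
    have hEab : E a b := hNE a b hab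
    have hgb : pNb b = some a := (hNcons a b).mp hab
    have hfval : f a = voteOpt (rA a) (pSa a) (some b) := by rw [hf]; simp [hab]
    have hgval : g b = voteOpt (rB b) (pSb b) (some a) := by rw [hg]; simp [hgb]
    by_cases hS : pSa a = some b
    · have hSb : pSb b = some a := (hScons a b).mp hS
      rw [hfval, hgval, hS, hSb]
      simp [voteOpt]
    · have hSb : pSb b ≠ some a := fun h => hS ((hScons a b).mpr h)
      rcases voteOpt_vs_some (rA a) (hrA a) (pSa a) b hS with h1 | ⟨h1, hc1⟩ <;>
      rcases voteOpt_vs_some (rB b) (hrB b) (pSb b) a hSb with h2 | ⟨h2, hc2⟩ <;>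
        rw [hfval, hgval, h1, h2]
      · norm_num
      · norm_num
      · norm_num
      · rcases hc2 with h | ⟨a', ha', hlt⟩
        · exact absurd h (hstable a b hEab hS hc1).1
        · exact absurd hlt (not_lt.mpr ((hstable a b hEab hS hc1).2 a' ha'))
  -- split sums over matched/unmatched in N
  have hsplitA := Finset.sum_filter_add_sum_filter_not Finset.univ
    (fun a => (pNa a).isSome) f
  have hsplitB := Finset.sum_filter_add_sum_filter_not Finset.univ
    (fun b => (pNb b).isSome) g
  set TA := Finset.univ.filter (fun a => (pNa a).isSome) with hTA
  set TB := Finset.univ.filter (fun b => (pNb b).isSome) with hTB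
  have hA2 : 0 ≤ ∑ a ∈ Finset.univ.filter (fun a => ¬ (pNa a).isSome), f a := by
    apply Finset.sum_nonneg
    intro a ha
    simp only [Finset.mem_filter, Option.not_isSome_iff_eq_none] at ha
    rw [hf]; simp only [ha.2]
    exact voteOpt_none_nonneg _ _
  have hB2 : 0 ≤ ∑ b ∈ Finset.univ.filter (fun b => ¬ (pNb b).isSome), g b := by
    apply Finset.sum_nonneg
    intro b hb
    simp only [Finset.mem_filter, Option.not_isSome_iff_eq_none] at hb
    rw [hg]; simp only [hb.2]
    exact voteOpt_none_nonneg _ _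
  set gA : A → ℤ := fun a => if h : (pNa a).isSome then g ((pNa a).get h) else 0
    with hgA
  have hbij : ∑ b ∈ TB, g b = ∑ a ∈ TA, gA a := by
    refine Finset.sum_bij' (fun b hb => (pNb b).get (by
        simpa [hTB] using hb))
      (fun a ha => (pNa a).get (by simpa [hTA] using ha)) ?_ ?_ ?_ ?_ ?_
    · intro b hb
      have hb' : (pNb b).isSome := by simpa [hTB] using hb
      have : pNa ((pNb b).get hb') = some b :=
        (hNcons _ b).mpr (Option.some_get hb').symm
      simp [hTA, this]
    · intro a ha
      have ha' : (pNa a).isSome := by simpa [hTA] using ha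
      have : pNb ((pNa a).get ha') = some a :=
        (hNcons a _).mp (Option.some_get ha').symm
      simp [hTB, this]
    · intro b hb
      have hb' : (pNb b).isSome := by simpa [hTB] using hb
      have h1 : pNa ((pNb b).get hb') = some b :=
        (hNcons _ b).mpr (Option.some_get hb').symm
      simp [h1]
    · intro a ha
      have ha' : (pNa a).isSome := by simpa [hTA] using ha
      have h1 : pNb ((pNa a).get ha') = some a :=
        (hNcons a _).mp (Option.some_get ha').symm
      simp [h1]
    · intro b hb
      have hb' : (pNb b).isSome := by simpa [hTB] using hb
      have h1 : pNa ((pNb b).get hb') = some b :=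
        (hNcons _ b).mpr (Option.some_get hb').symm
      rw [hgA]
      simp [h1]
  have hmatched : 0 ≤ ∑ a ∈ TA, f a + ∑ b ∈ TB, g b := by
    rw [hbij, ← Finset.sum_add_distrib]
    apply Finset.sum_nonneg
    intro a ha
    have hsome : (pNa a).isSome := by simpa [hTA] using ha
    obtain ⟨b, hb⟩ := Option.isSome_iff_exists.mp hsome
    have : gA a = g b := by rw [hgA]; simp [hb]
    rw [this]
    exact key a b hb
  rw [← hsplitA, ← hsplitB]
  have hcomm := add_add_add_comm (∑ a ∈ TA, f a)
    (∑ a ∈ Finset.univ.filter (fun a => ¬ (pNa a).isSome), f a)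
    (∑ b ∈ TB, g b)
    (∑ b ∈ Finset.univ.filter (fun b => ¬ (pNb b).isSome), g b)
  rw [hcomm]
  have := add_nonneg (add_nonneg hmatched hA2) hB2
  linarith
end
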